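/- arXiv:1208.3885 — 7 statements merged into one kernel-verified Lean document; each statement's English description precedes it below -/
import Mathlib

section
/- Let N be a Poisson distributed random variable with parameter λ satisfying 0 ≤ λ ≤ 1. Then for every p with 2 ≤ p < ∞ there exists a constant b_p > 0 (depending only on p) such that E|N − λ|^p ≥ b_p · λ. -/
open MeasureTheory ProbabilityTheory Real

lemma poisson_aux_bound (p : ℝ) (hp : 0 ≤ p) (lam : NNReal) (hlam : lam ≤ 1) (n : ℕ) :
    |(n : ℝ) - (lam : ℝ)| ^ p * poissonPMFReal lam n ≤ exp p * ((exp p) ^ n / (n.factorial : ℝ)) := by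
  have hl0 : (0:ℝ) ≤ lam := lam.coe_nonneg
  have hl1 : (lam : ℝ) ≤ 1 := by exact_mod_cast hlam
  have h1 : |(n : ℝ) - (lam : ℝ)| ≤ (n : ℝ) + 1 := by
    rw [abs_sub_le_iff]; constructor <;> nlinarith
  have h2 : |(n : ℝ) - (lam : ℝ)| ^ p ≤ ((n : ℝ) + 1) ^ p :=
    Real.rpow_le_rpow (abs_nonneg _) h1 hp
  have h3 : ((n : ℝ) + 1) ≤ exp n := by
    have := Real.add_one_le_exp (n : ℝ); linarith
  have h4 : ((n : ℝ) + 1) ^ p ≤ (exp n) ^ p :=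
    Real.rpow_le_rpow (by positivity) h3 hp
  have h5 : (exp (n : ℝ)) ^ p = exp p * (exp p) ^ n / exp p := by
    rw [← Real.exp_mul, mul_comm (n:ℝ) p, Real.exp_mul, Real.rpow_natCast]
    field_simp
  have h6 : |(n : ℝ) - (lam : ℝ)| ^ p ≤ (exp p) ^ n := by
    calc |(n : ℝ) - (lam : ℝ)| ^ p ≤ (exp (n : ℝ)) ^ p := le_trans h2 h4
    _ = exp p * (exp p) ^ n / exp p := h5
    _ = (exp p) ^ n := by field_simp
  have h7 : poissonPMFReal lam n ≤ exp p / (n.factorial : ℝ) := by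
    unfold poissonPMFReal
    have hexp : exp (-(lam:ℝ)) ≤ 1 := exp_le_one_iff.mpr (by linarith)
    have hpow : (lam : ℝ) ^ n ≤ 1 := pow_le_one₀ hl0 hl1
    have h1p : (1:ℝ) ≤ exp p := by
      rw [← Real.exp_zero]; exact exp_le_exp.mpr hp
    have hfac : (0:ℝ) < (n.factorial : ℝ) := by positivity
    rw [div_le_div_iff₀ hfac hfac]
    have : exp (-(lam:ℝ)) * (lam:ℝ) ^ n ≤ 1 := by
      have := mul_le_mul hexp hpow (by positivity) zero_le_one
      simpa using this
    nlinarith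
  have hfn : 0 ≤ |(n : ℝ) - (lam : ℝ)| ^ p := Real.rpow_nonneg (abs_nonneg _) _
  calc |(n : ℝ) - (lam : ℝ)| ^ p * poissonPMFReal lam n
      ≤ (exp p) ^ n * (exp p / (n.factorial : ℝ)) :=
        mul_le_mul h6 h7 poissonPMFReal_nonneg (by positivity)
    _ = exp p * ((exp p) ^ n / (n.factorial : ℝ)) := by ring

/-- For every `2 ≤ p < ∞` there is a constant `b_p > 0` such that for a Poisson
random variable `N` with parameter `0 ≤ λ ≤ 1` one has `E|N - λ|^p ≥ b_p · λ`. -/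
theorem poisson_central_moment_lower_bound (p : ℝ) (hp : 2 ≤ p) :
    ∃ b : ℝ, 0 < b ∧ ∀ lam : NNReal, lam ≤ 1 →
      b * (lam : ℝ) ≤ ∫ n : ℕ, |(n : ℝ) - (lam : ℝ)| ^ p ∂(poissonMeasure lam) := by
  have hp0 : (0:ℝ) ≤ p := by linarith
  refine ⟨(1/2) ^ p * exp (-1), by positivity, ?_⟩
  intro lam hlam
  have hl0 : (0:ℝ) ≤ lam := lam.coe_nonneg
  have hl1 : (lam : ℝ) ≤ 1 := by exact_mod_cast hlam
  set f : ℕ → ℝ := fun n => |(n : ℝ) - (lam : ℝ)| ^ p with hf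
  have hfn : ∀ n, 0 ≤ f n := fun n => Real.rpow_nonneg (abs_nonneg _) _
  have hbound := poisson_aux_bound p hp0 lam hlam
  have hgsum : Summable (fun n : ℕ => exp p * ((exp p) ^ n / (n.factorial : ℝ))) :=
    (Real.summable_pow_div_factorial (exp p)).mul_left _
  -- the terms of the expectation series
  have hterm : ∀ n : ℕ, ((poissonPMF lam n).toReal) = poissonPMFReal lam n := by
    intro n
    have h : (poissonPMF lam) n = ENNReal.ofReal (poissonPMFReal lam n) :=
      (poissonPMFReal_ofReal_eq_poissonPMF lam n).symm
    rw [h, ENNReal.toReal_ofReal poissonPMFReal_nonneg]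
  have htermsum : Summable (fun n : ℕ => (poissonPMF lam n).toReal * f n) := by
    apply Summable.of_nonneg_of_le
      (fun n => mul_nonneg ENNReal.toReal_nonneg (hfn n))
      (fun n => ?_) hgsum
    rw [hterm n, mul_comm]
    exact hbound n
  have hint : Integrable f (poissonMeasure lam) := by
    constructor
    · exact (measurable_of_countable f).aestronglyMeasurable
    · rw [HasFiniteIntegral, lintegral_countable']
      have hsingleton : ∀ n : ℕ, poissonMeasure lam {n} =
          ENNReal.ofReal (poissonPMFReal lam n) := by
        intro n
        rw [poissonMeasure_singleton, poissonPMFReal]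
      calc ∑' n : ℕ, (‖f n‖₊ : ENNReal) * poissonMeasure lam {n}
          ≤ ∑' n : ℕ, ENNReal.ofReal (exp p * ((exp p) ^ n / (n.factorial : ℝ))) := by
            apply ENNReal.tsum_le_tsum
            intro n
            rw [hsingleton n, ← enorm_eq_nnnorm, Real.enorm_eq_ofReal (hfn n),
              ← ENNReal.ofReal_mul (hfn n)]
            exact ENNReal.ofReal_le_ofReal (hbound n)
        _ = ENNReal.ofReal (∑' n : ℕ, exp p * ((exp p) ^ n / (n.factorial : ℝ))) :=
            (ENNReal.ofReal_tsum_of_nonneg (fun n => by positivity) hgsum).symm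
        _ < ⊤ := ENNReal.ofReal_lt_top
  have hμ : poissonMeasure lam = (poissonPMF lam).toMeasure :=
      Measure.ext_iff_singleton.mpr fun n => by
        rw [poissonMeasure_singleton, PMF.toMeasure_apply_singleton _ _ (measurableSet_singleton n),
          ← poissonPMFReal_ofReal_eq_poissonPMF, poissonPMFReal]
  rw [hμ] at hint
  rw [hμ,
    PMF.integral_eq_tsum _ f hint]
  simp only [smul_eq_mul]
  have hle : ∀ k : ℕ, (poissonPMF lam k).toReal * f k ≤
      ∑' n : ℕ, (poissonPMF lam n).toReal * f n := fun k =>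
    Summable.le_tsum htermsum k (fun i _ => mul_nonneg ENNReal.toReal_nonneg (hfn i))
  have hexplam : exp (-1:ℝ) ≤ exp (-(lam:ℝ)) := exp_le_exp.mpr (by linarith)
  rcases le_or_gt (lam : ℝ) (1/2) with hc | hc
  · -- use k = 1
    refine le_trans ?_ (hle 1)
    rw [hterm 1]
    have hpmf : poissonPMFReal lam 1 = exp (-(lam:ℝ)) * lam := by
      unfold poissonPMFReal; simp
    rw [hpmf, hf]
    have habs : |(1:ℝ) - (lam:ℝ)| = 1 - lam := abs_of_nonneg (by linarith)
    have h12 : ((1:ℝ)/2) ^ p ≤ (1 - (lam:ℝ)) ^ p :=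
      Real.rpow_le_rpow (by norm_num) (by linarith) hp0
    calc (1/2:ℝ) ^ p * exp (-1) * lam
        ≤ (1 - (lam:ℝ)) ^ p * exp (-(lam:ℝ)) * lam := by
          apply mul_le_mul_of_nonneg_right _ hl0
          exact mul_le_mul h12 hexplam (exp_pos _).le (Real.rpow_nonneg (by linarith) _)
      _ = exp (-(lam:ℝ)) * lam * |((1:ℕ):ℝ) - (lam:ℝ)| ^ p := by
          push_cast
          rw [habs]; ring
  · -- use k = 2
    refine le_trans ?_ (hle 2)
    rw [hterm 2]
    have hpmf : poissonPMFReal lam 2 = exp (-(lam:ℝ)) * lam ^ 2 / 2 := by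
      unfold poissonPMFReal; norm_num
    rw [hpmf, hf]
    have habs : |(2:ℝ) - (lam:ℝ)| = 2 - lam := abs_of_nonneg (by linarith)
    have h1 : (1:ℝ) ≤ (2 - (lam:ℝ)) ^ p := by
      rw [show (1:ℝ) = 1 ^ p from (Real.one_rpow p).symm]
      exact Real.rpow_le_rpow zero_le_one (by linarith) hp0
    have h14 : ((1:ℝ)/2) ^ p ≤ 1/4 := by
      have := Real.rpow_le_rpow_of_exponent_ge (by norm_num : (0:ℝ) < 1/2)
        (by norm_num : (1:ℝ)/2 ≤ 1) hp
      rw [show ((1:ℝ)/2) ^ (2:ℝ) = 1/4 by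
        rw [show (2:ℝ) = ((2:ℕ):ℝ) by norm_num, Real.rpow_natCast]; norm_num] at this
      exact this
    have key : (1/2:ℝ) ^ p * exp (-1) * lam ≤ exp (-(lam:ℝ)) * lam ^ 2 / 2 := by
      have h2 : (lam:ℝ) ^ 2 ≥ lam / 2 := by nlinarith
      have h3 : exp (-1:ℝ) * (lam/2) / 2 ≤ exp (-(lam:ℝ)) * lam ^ 2 / 2 := by
        apply div_le_div_of_nonneg_right _ (by norm_num)
        exact mul_le_mul hexplam (by linarith) (by linarith) (exp_pos _).le
      calc (1/2:ℝ) ^ p * exp (-1) * lam ≤ 1/4 * exp (-1) * lam := by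
            apply mul_le_mul_of_nonneg_right _ hl0
            exact mul_le_mul_of_nonneg_right h14 (exp_pos _).le
        _ = exp (-1:ℝ) * (lam/2) / 2 := by ring
        _ ≤ _ := h3
    calc (1/2:ℝ) ^ p * exp (-1) * lam ≤ exp (-(lam:ℝ)) * lam ^ 2 / 2 := key
      _ ≤ exp (-(lam:ℝ)) * lam ^ 2 / 2 * |((2:ℕ):ℝ) - (lam:ℝ)| ^ p := by
          push_cast
          rw [habs]
          exact le_mul_of_one_le_right (by positivity) h1
end

section
/- Let N be a Poisson distributed random variable with parameter λ satisfying 0 ≤ λ ≤ 1. Then for every p with 1 ≤ p < ∞ there exists a constant c_p > 0 (depending only on p) such that E|N − λ|^p ≤ c_p · λ. -/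
open MeasureTheory ProbabilityTheory Real
open scoped Nat

/-- For every `1 ≤ p < ∞` there is a constant `c_p > 0` such that for a Poisson
random variable `N` with parameter `0 ≤ λ ≤ 1` one has `E|N - λ|^p ≤ c_p · λ`. -/
theorem poisson_central_moment_upper_bound (p : ℝ) (hp : 1 ≤ p) :
    ∃ c : ℝ, 0 < c ∧ ∀ lam : NNReal, lam ≤ 1 →
      (∫ n : ℕ, |(n : ℝ) - (lam : ℝ)| ^ p ∂(poissonMeasure lam)) ≤ c * (lam : ℝ) := by
  set m : ℕ := ⌈p⌉₊ with hm
  set x : ℝ := (2 : ℝ) ^ m with hx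
  have hx0 : (0 : ℝ) ≤ x := by positivity
  refine ⟨Real.exp x, Real.exp_pos x, ?_⟩
  intro lam hlam
  set l : ℝ := (lam : ℝ) with hl
  have hl0 : (0 : ℝ) ≤ l := lam.coe_nonneg
  have hl1 : l ≤ 1 := by exact_mod_cast hlam
  -- summability of the dominating series
  have hgsum : Summable fun n : ℕ => x ^ n / (n ! : ℝ) :=
    Real.summable_pow_div_factorial x
  have hgval : (∑' n : ℕ, x ^ n / (n ! : ℝ)) = Real.exp x := by
    rw [Real.exp_eq_exp_ℝ]
    exact (NormedSpace.expSeries_div_hasSum_exp x).tsum_eq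
  -- pointwise bound
  have key : ∀ n : ℕ, |(n : ℝ) - l| ^ p * poissonPMFReal lam n ≤ l * (x ^ n / (n ! : ℝ)) := by
    intro n
    have hpmf0 : 0 ≤ poissonPMFReal lam n := poissonPMFReal_nonneg
    rcases Nat.eq_zero_or_pos n with rfl | hn
    · simp only [Nat.cast_zero, zero_sub, abs_neg, abs_of_nonneg hl0, pow_zero,
        Nat.factorial_zero, Nat.cast_one, div_one, mul_one]
      have h1 : l ^ p ≤ l := by
        rcases eq_or_lt_of_le hl0 with h | h
        · rw [← h, Real.zero_rpow (by linarith : p ≠ 0)]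
        · calc l ^ p ≤ l ^ (1 : ℝ) :=
                Real.rpow_le_rpow_of_exponent_ge h hl1 hp
            _ = l := Real.rpow_one l
      have h2 : poissonPMFReal lam 0 ≤ 1 := by
        unfold poissonPMFReal
        simp only [pow_zero, Nat.factorial_zero, Nat.cast_one, mul_one, div_one]
        exact Real.exp_le_one_iff.mpr (by simpa using hl0)
      calc l ^ p * poissonPMFReal lam 0 ≤ l ^ p * 1 := by
            exact mul_le_mul_of_nonneg_left h2 (Real.rpow_nonneg hl0 p)
        _ = l ^ p := mul_one _
        _ ≤ l := h1
    · have hn1 : (1 : ℝ) ≤ (n : ℝ) := by exact_mod_cast hn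
      have habs : |(n : ℝ) - l| ≤ (n : ℝ) := by
        rw [abs_of_nonneg (by linarith)]; linarith
      have h1 : |(n : ℝ) - l| ^ p ≤ x ^ n := by
        calc |(n : ℝ) - l| ^ p ≤ (n : ℝ) ^ p :=
              Real.rpow_le_rpow (abs_nonneg _) habs (by linarith)
          _ ≤ (n : ℝ) ^ (m : ℝ) :=
              Real.rpow_le_rpow_of_exponent_le hn1 (Nat.le_ceil p)
          _ = (n : ℝ) ^ m := by rw [Real.rpow_natCast]
          _ ≤ ((2 : ℝ) ^ n) ^ m := by
              apply pow_le_pow_left₀ (by positivity)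
              exact_mod_cast Nat.le_of_lt (Nat.lt_two_pow_self (n := n))
          _ = x ^ n := by rw [← pow_mul, mul_comm, pow_mul]
      have h2 : poissonPMFReal lam n ≤ l / (n ! : ℝ) := by
        unfold poissonPMFReal
        have hln : l ^ n ≤ l := by
          calc l ^ n ≤ l ^ 1 := pow_le_pow_of_le_one hl0 hl1 hn
            _ = l := pow_one l
        have : Real.exp (-(lam : ℝ)) * (lam : ℝ) ^ n ≤ l := by
          calc Real.exp (-(lam : ℝ)) * (lam : ℝ) ^ n ≤ 1 * l ^ n := by
                apply mul_le_mul _ le_rfl (by positivity) zero_le_one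
                exact Real.exp_le_one_iff.mpr (by simpa using hl0)
            _ = l ^ n := one_mul _
            _ ≤ l := hln
        exact div_le_div_of_nonneg_right this (by positivity) |>.trans_eq rfl
      calc |(n : ℝ) - l| ^ p * poissonPMFReal lam n ≤ x ^ n * (l / (n ! : ℝ)) := by
            apply mul_le_mul h1 h2 hpmf0 (by positivity)
        _ = l * (x ^ n / (n ! : ℝ)) := by ring
    -- rewrite the integral via lintegral
  have hmeas : Measurable fun n : ℕ => |(n : ℝ) - l| ^ p := measurable_from_nat
  have hnonneg : ∀ n : ℕ, 0 ≤ |(n : ℝ) - l| ^ p := fun n =>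
    Real.rpow_nonneg (abs_nonneg _) p
  rw [MeasureTheory.integral_eq_lintegral_of_nonneg_ae
      (Filter.Eventually.of_forall hnonneg) hmeas.aestronglyMeasurable]
  have hsing : ∀ n : ℕ, (poissonMeasure lam) {n} =
      ENNReal.ofReal (poissonPMFReal lam n) := by
    intro n
    rw [poissonMeasure_singleton]
    rfl
  have hlin : (∫⁻ n : ℕ, ENNReal.ofReal (|(n : ℝ) - l| ^ p) ∂(poissonMeasure lam)) ≤
      ENNReal.ofReal (Real.exp x * l) := by
    rw [MeasureTheory.lintegral_countable' _]
    calc (∑' n : ℕ, ENNReal.ofReal (|(n : ℝ) - l| ^ p) * (poissonMeasure lam) {n})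
        ≤ ∑' n : ℕ, ENNReal.ofReal (l * (x ^ n / (n ! : ℝ))) := by
          apply ENNReal.tsum_le_tsum
          intro n
          rw [hsing n, ← ENNReal.ofReal_mul (hnonneg n)]
          exact ENNReal.ofReal_le_ofReal (key n)
      _ = ENNReal.ofReal (∑' n : ℕ, l * (x ^ n / (n ! : ℝ))) := by
          rw [ENNReal.ofReal_tsum_of_nonneg (fun n => by positivity) (hgsum.mul_left l)]
      _ = ENNReal.ofReal (Real.exp x * l) := by
          rw [tsum_mul_left, hgval, mul_comm]
  calc (∫⁻ n : ℕ, ENNReal.ofReal (|(n : ℝ) - l| ^ p) ∂(poissonMeasure lam)).toReal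
      ≤ (ENNReal.ofReal (Real.exp x * l)).toReal :=
        ENNReal.toReal_mono ENNReal.ofReal_ne_top hlin
    _ = Real.exp x * l := ENNReal.toReal_ofReal (by positivity)
end

section
/- Let N be a Poisson distributed random variable with parameter λ ≥ 0 and let n be a positive even integer. Then the n-th central moment E(N − λ)^n can be written as λ · p_n(λ) for some polynomial p_n with nonnegative coefficients. -/
open MeasureTheory ProbabilityTheory Real
open scoped ENNReal NNReal Nat

noncomputable def pcm : ℕ → Polynomial ℝ
  | 0 => 1
  | n + 1 => Polynomial.X * ∑ j ∈ (Finset.range n).attach,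
      ((n.choose j : ℝ)) • pcm j
decreasing_by
  have := j.2; simp only [Finset.mem_range] at this; omega

lemma pcm_coeff_nonneg : ∀ n k, 0 ≤ (pcm n).coeff k := by
  intro n
  induction n using Nat.strong_induction_on with
  | _ n ih =>
    match n with
    | 0 => intro k; rw [pcm]; rw [Polynomial.coeff_one]; positivity
    | n + 1 =>
      intro k
      rw [pcm]
      match k with
      | 0 => simp [Polynomial.mul_coeff_zero]
      | k + 1 =>
        rw [Polynomial.coeff_X_mul, Polynomial.finset_sum_coeff]
        apply Finset.sum_nonneg
        intro j _
        rw [Polynomial.coeff_smul, smul_eq_mul]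
        have hj := j.2; simp only [Finset.mem_range] at hj
        exact mul_nonneg (by positivity) (ih j (by omega) k)

lemma summable_master (m : ℕ) {x : ℝ} (hx : 0 ≤ x) :
    Summable (fun k : ℕ => ((k : ℝ) + 1) ^ m * x ^ k / k !) := by
  have hs : Summable (fun k : ℕ => (2 : ℝ) ^ m * (((2 : ℝ) ^ m * x) ^ k / k !)) :=
    (Real.summable_pow_div_factorial ((2 : ℝ) ^ m * x)).mul_left _
  refine Summable.of_nonneg_of_le (fun k => by positivity) (fun k => ?_) hs
  have h1 : ((k : ℝ) + 1) ^ m ≤ (2 : ℝ) ^ m * ((2 : ℝ) ^ m) ^ k := by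
    have hk : (k : ℝ) + 1 ≤ (2 : ℝ) ^ (k + 1) := by
      have := Nat.lt_two_pow_self (n := k)
      have : (k : ℝ) + 1 ≤ ((2 ^ k : ℕ) : ℝ) := by exact_mod_cast this
      calc (k : ℝ) + 1 ≤ ((2 ^ k : ℕ) : ℝ) := this
        _ ≤ (2:ℝ) ^ (k+1) := by
            rw [pow_succ]
            push_cast
            nlinarith [pow_nonneg (by norm_num : (0:ℝ) ≤ 2) k]
    calc ((k : ℝ) + 1) ^ m ≤ ((2:ℝ) ^ (k+1)) ^ m := by
          apply pow_le_pow_left₀ (by positivity) hk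
      _ = (2 : ℝ) ^ m * ((2 : ℝ) ^ m) ^ k := by
          rw [← pow_mul, ← pow_mul, ← pow_add]; ring_nf
    -- (2^(k+1))^m = 2^((k+1)m) = 2^m * 2^(km)
  have h2 : ((k : ℝ) + 1) ^ m * x ^ k ≤ (2 : ℝ) ^ m * ((2 : ℝ) ^ m * x) ^ k := by
    rw [mul_pow]
    calc ((k : ℝ) + 1) ^ m * x ^ k ≤ ((2:ℝ) ^ m * ((2:ℝ)^m) ^ k) * x ^ k :=
      mul_le_mul_of_nonneg_right h1 (by positivity)
      _ = (2:ℝ) ^ m * (((2:ℝ)^m) ^ k * x ^ k) := by ring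
  calc ((k : ℝ) + 1) ^ m * x ^ k / k ! ≤ ((2:ℝ) ^ m * ((2:ℝ)^m * x) ^ k) / k ! := by
        have hk : (0:ℝ) < k ! := by exact_mod_cast Nat.factorial_pos k
        exact div_le_div_of_nonneg_right h2 hk.le
    _ = (2 : ℝ) ^ m * (((2 : ℝ) ^ m * x) ^ k / k !) := by ring

lemma summable_poisson_bound (lam : ℝ≥0) {f : ℕ → ℝ} (C : ℝ) (m : ℕ)
    (h : ∀ k, |f k| ≤ C * ((k : ℝ) + 1) ^ m) :
    Summable (fun k => poissonPMFReal lam k * f k) := by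
  have hC : 0 ≤ C := by have := (abs_nonneg (f 0)).trans (h 0); simpa using this
  apply Summable.of_abs
  have hs : Summable (fun k : ℕ => (C * rexp (-(lam:ℝ))) * (((k:ℝ)+1) ^ m * (lam:ℝ) ^ k / k !)) :=
    (summable_master m lam.coe_nonneg).mul_left _
  refine Summable.of_nonneg_of_le (fun k => abs_nonneg _) (fun k => ?_) hs
  rw [abs_mul, abs_of_nonneg poissonPMFReal_nonneg]
  calc poissonPMFReal lam k * |f k| ≤ poissonPMFReal lam k * (C * ((k:ℝ)+1)^m) :=
        mul_le_mul_of_nonneg_left (h k) poissonPMFReal_nonneg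
    _ = (C * rexp (-(lam:ℝ))) * (((k:ℝ)+1) ^ m * (lam:ℝ) ^ k / k !) := by
        unfold poissonPMFReal; ring

lemma poissonPMF_apply (lam : ℝ≥0) (k : ℕ) :
    poissonPMF lam k = ENNReal.ofReal (poissonPMFReal lam k) := rfl

lemma integrable_poisson_bound (lam : ℝ≥0) {f : ℕ → ℝ} (C : ℝ) (m : ℕ)
    (h : ∀ k, |f k| ≤ C * ((k : ℝ) + 1) ^ m) :
    Integrable f (poissonMeasure lam) := by
  refine ⟨Measurable.aestronglyMeasurable (measurable_of_countable f), ?_⟩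
  rw [HasFiniteIntegral, lintegral_countable']
  have habs : Summable (fun k => poissonPMFReal lam k * |f k|) :=
    summable_poisson_bound lam C m (fun k => by rw [abs_abs]; exact h k)
  have key : ∀ k : ℕ, ‖f k‖ₑ * poissonMeasure lam {k}
      = ENNReal.ofReal (poissonPMFReal lam k * |f k|) := by
    intro k
    rw [Real.enorm_eq_ofReal_abs]
    rw [show poissonMeasure lam {k} = poissonPMF lam k from
      poissonMeasure_singleton lam k]
    rw [poissonPMF_apply, ← ENNReal.ofReal_mul (abs_nonneg _), mul_comm]
  simp only [key]
  rw [← ENNReal.ofReal_tsum_of_nonneg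
      (fun k => mul_nonneg poissonPMFReal_nonneg (abs_nonneg _)) habs]
  exact ENNReal.ofReal_lt_top

lemma integral_poisson_eq_tsum (lam : ℝ≥0) {f : ℕ → ℝ}
    (hf : Integrable f (poissonMeasure lam)) :
    ∫ k : ℕ, f k ∂(poissonMeasure lam) = ∑' k, poissonPMFReal lam k * f k := by
  rw [integral_poissonMeasure' hf]
  rfl

lemma chen (lam : ℝ≥0) (g : ℕ → ℝ) (C : ℝ) (m : ℕ)
    (hC : ∀ k, |g k| ≤ C * ((k : ℝ) + 1) ^ m) :
    ∫ k : ℕ, (k : ℝ) * g k ∂(poissonMeasure lam)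
      = (lam : ℝ) * ∫ k : ℕ, g (k + 1) ∂(poissonMeasure lam) := by
  have hC0 : 0 ≤ C := by have := (abs_nonneg (g 0)).trans (hC 0); simpa using this
  have hb1 : ∀ k : ℕ, |(k : ℝ) * g k| ≤ C * ((k : ℝ) + 1) ^ (m + 1) := by
    intro k
    rw [abs_mul, abs_of_nonneg (Nat.cast_nonneg k)]
    calc (k : ℝ) * |g k| ≤ ((k : ℝ) + 1) * (C * ((k : ℝ) + 1) ^ m) := by
          apply mul_le_mul (by linarith) (hC k) (abs_nonneg _) (by positivity)
      _ = C * ((k : ℝ) + 1) ^ (m + 1) := by ring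
  have hb2 : ∀ k : ℕ, |g (k + 1)| ≤ (C * 2 ^ m) * ((k : ℝ) + 1) ^ m := by
    intro k
    calc |g (k + 1)| ≤ C * ((k : ℝ) + 1 + 1) ^ m := by
          have := hC (k + 1); push_cast at this ⊢; linarith
      _ ≤ (C * 2 ^ m) * ((k : ℝ) + 1) ^ m := by
          rw [mul_assoc, ← mul_pow]
          apply mul_le_mul_of_nonneg_left ?_ hC0
          apply pow_le_pow_left₀ (by positivity) (by linarith)
  have hi1 : Integrable (fun k : ℕ => (k : ℝ) * g k) (poissonMeasure lam) :=
    integrable_poisson_bound lam C (m + 1) hb1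
  have hi2 : Integrable (fun k : ℕ => g (k + 1)) (poissonMeasure lam) :=
    integrable_poisson_bound lam (C * 2 ^ m) m hb2
  rw [integral_poisson_eq_tsum lam hi1, integral_poisson_eq_tsum lam hi2]
  have hsum : Summable (fun k => poissonPMFReal lam k * ((k : ℝ) * g k)) :=
    summable_poisson_bound lam C (m + 1) hb1
  rw [hsum.tsum_eq_zero_add]
  have h0 : poissonPMFReal lam 0 * ((0 : ℕ) * g 0) = 0 := by simp
  rw [h0, zero_add, ← tsum_mul_left]
  refine tsum_congr fun k => ?_
  unfold poissonPMFReal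
  rw [Nat.factorial_succ]
  have hfac : ((k ! : ℝ)) ≠ 0 := by exact_mod_cast (Nat.factorial_pos k).ne'
  have hk1 : ((k : ℝ) + 1) ≠ 0 := by positivity
  push_cast
  field_simp
  ring

lemma integrable_centered (lam : ℝ≥0) (j : ℕ) :
    Integrable (fun k : ℕ => ((k : ℝ) - (lam : ℝ)) ^ j) (poissonMeasure lam) := by
  apply integrable_poisson_bound lam (((lam : ℝ) + 1) ^ j) j
  intro k
  rw [abs_pow, ← mul_pow]
  apply pow_le_pow_left₀ (abs_nonneg _)
  rw [abs_sub_comm]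
  calc |(lam : ℝ) - k| ≤ (lam : ℝ) + k := by
        have := lam.coe_nonneg; have := Nat.cast_nonneg (α := ℝ) k
        rw [abs_sub_le_iff]; constructor <;> linarith
    _ ≤ ((lam : ℝ) + 1) * ((k : ℝ) + 1) := by
        have := lam.coe_nonneg; have := Nat.cast_nonneg (α := ℝ) k; nlinarith

lemma central_moment_eq (lam : ℝ≥0) :
    ∀ n, ∫ k : ℕ, ((k : ℝ) - (lam : ℝ)) ^ n ∂(poissonMeasure lam)
      = (pcm n).eval (lam : ℝ) := by
  intro n
  induction n using Nat.strong_induction_on with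
  | _ n ih =>
    match n with
    | 0 => simp [pcm]
    | m + 1 =>
      set L : ℝ := (lam : ℝ) with hLdef
      have key := chen lam (fun k => ((k : ℝ) - L) ^ m) ((L + 1) ^ m) m (by
        intro k
        rw [abs_pow, ← mul_pow]
        apply pow_le_pow_left₀ (abs_nonneg _)
        rw [abs_sub_comm]
        calc |L - k| ≤ L + k := by
              have := lam.coe_nonneg; have := Nat.cast_nonneg (α := ℝ) k
              rw [abs_sub_le_iff]; constructor <;> linarith
          _ ≤ (L + 1) * ((k : ℝ) + 1) := by
              have := lam.coe_nonneg; have := Nat.cast_nonneg (α := ℝ) k; nlinarith)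
      -- split (k-L)^(m+1) = k*(k-L)^m - L*(k-L)^m
      have hsplit : (fun k : ℕ => ((k : ℝ) - L) ^ (m + 1))
          = fun k : ℕ => (k : ℝ) * ((k : ℝ) - L) ^ m - L * ((k : ℝ) - L) ^ m := by
        funext k; rw [pow_succ, ← sub_mul]; ring
      have hiL : Integrable (fun k : ℕ => L * ((k : ℝ) - L) ^ m) (poissonMeasure lam) :=
        (integrable_centered lam m).const_mul L
      have hik : Integrable (fun k : ℕ => (k : ℝ) * ((k : ℝ) - L) ^ m) (poissonMeasure lam) := by
        apply integrable_poisson_bound lam (f := fun k : ℕ => (k : ℝ) * ((k : ℝ) - L) ^ m)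
          ((L+1)^m) (m+1)
        intro k
        rw [abs_mul, abs_of_nonneg (Nat.cast_nonneg k)]
        have h1 : |((k:ℝ) - L) ^ m| ≤ (L+1)^m * ((k:ℝ)+1)^m := by
          rw [abs_pow, ← mul_pow]
          apply pow_le_pow_left₀ (abs_nonneg _)
          rw [abs_sub_comm]
          calc |L - k| ≤ L + k := by
                have := lam.coe_nonneg; have := Nat.cast_nonneg (α := ℝ) k
                rw [abs_sub_le_iff]; constructor <;> linarith
            _ ≤ (L + 1) * ((k : ℝ) + 1) := by
                have := lam.coe_nonneg; have := Nat.cast_nonneg (α := ℝ) k; nlinarith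
        calc (k:ℝ) * |((k:ℝ) - L) ^ m| ≤ ((k:ℝ)+1) * ((L+1)^m * ((k:ℝ)+1)^m) := by
              apply mul_le_mul (by linarith) h1 (abs_nonneg _) (by positivity)
          _ = (L+1)^m * ((k:ℝ)+1)^(m+1) := by ring
      rw [hsplit, integral_sub hik hiL, integral_const_mul, key,
        ih m (Nat.lt_succ_self m)]
      -- expand ∫ (k+1-L)^m
      have hexp : (fun k : ℕ => ((k : ℝ) + 1 - L) ^ m)
          = fun k : ℕ => ∑ j ∈ Finset.range (m + 1),
              ((k : ℝ) - L) ^ j * (m.choose j : ℝ) := by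
        funext k
        rw [show ((k : ℝ) + 1 - L) = ((k : ℝ) - L) + 1 by ring, add_pow]
        refine Finset.sum_congr rfl fun j _ => by rw [one_pow, mul_one]
      have hsum : ∫ k : ℕ, ((k : ℝ) + 1 - L) ^ m ∂(poissonMeasure lam)
          = ∑ j ∈ Finset.range (m + 1), (m.choose j : ℝ) * (pcm j).eval L := by
        have : ∀ k : ℕ, ((k : ℝ) + 1 - L) = (((k+1 : ℕ) : ℝ) - L) := by
          intro k; push_cast; ring
        rw [hexp, integral_finset_sum _ (fun j _ =>
          ((integrable_centered lam j).mul_const _))]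
        refine Finset.sum_congr rfl fun j hj => ?_
        rw [integral_mul_const, ih j (by simp only [Finset.mem_range] at hj; omega)]
        ring
      have hconv : ∫ k : ℕ, (fun k : ℕ => ((k : ℝ) - L) ^ m) (k + 1) ∂(poissonMeasure lam)
          = ∫ k : ℕ, ((k : ℝ) + 1 - L) ^ m ∂(poissonMeasure lam) := by
        refine integral_congr_ae (Filter.Eventually.of_forall fun k => ?_)
        push_cast; ring_nf
      rw [hconv, hsum]
      -- now RHS: eval pcm (m+1)
      rw [pcm]
      rw [Polynomial.eval_mul, Polynomial.eval_X, Polynomial.eval_finset_sum]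
      have : ∑ j ∈ (Finset.range m).attach,
            Polynomial.eval L ((↑(m.choose ↑j) : ℝ) • pcm ↑j)
          = ∑ j ∈ Finset.range m, (m.choose j : ℝ) * (pcm j).eval L := by
        rw [← Finset.sum_attach (Finset.range m)
          (fun j => (m.choose j : ℝ) * (pcm j).eval L)]
        refine Finset.sum_congr rfl fun j _ => by
          rw [Polynomial.eval_smul, smul_eq_mul]
      rw [this, Finset.sum_range_succ, Nat.choose_self]
      push_cast
      ring

lemma pcm_succ (n : ℕ) : pcm (n + 1)
    = Polynomial.X * ∑ j ∈ Finset.range n, ((n.choose j : ℝ)) • pcm j := by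
  rw [pcm, Finset.sum_attach (Finset.range n) (fun j => ((n.choose j : ℝ)) • pcm j)]

/-- For a Poisson random variable `N` with parameter `λ ≥ 0` and a positive even
integer `n`, the `n`-th central moment `E (N - λ)^n` equals `λ · p_n(λ)` for a
polynomial `p_n` with nonnegative coefficients. -/
theorem poisson_central_moment_even_polynomial (n : ℕ) (hn : Even n) (hn0 : 0 < n) :
    ∃ P : Polynomial ℝ, (∀ k, 0 ≤ P.coeff k) ∧
      ∀ lam : NNReal,
        ∫ k : ℕ, ((k : ℝ) - (lam : ℝ)) ^ n ∂(poissonMeasure lam)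
          = (lam : ℝ) * P.eval (lam : ℝ) := by
  obtain ⟨m, rfl⟩ : ∃ m, n = m + 1 := ⟨n - 1, by omega⟩
  refine ⟨∑ j ∈ Finset.range m, ((m.choose j : ℝ)) • pcm j, ?_, ?_⟩
  · intro k
    rw [Polynomial.finset_sum_coeff]
    refine Finset.sum_nonneg fun j _ => ?_
    rw [Polynomial.coeff_smul, smul_eq_mul]
    exact mul_nonneg (by positivity) (pcm_coeff_nonneg j k)
  · intro lam
    rw [central_moment_eq lam (m + 1), pcm_succ, Polynomial.eval_mul, Polynomial.eval_X]
end

section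
/- For every p with 2 ≤ p < ∞, the function f_p(λ) = λ^{p−1} − λ^2 + λ − 1 + (1−λ)^p satisfies 1 + e^{−λ} f_p(λ) > 0 for all λ ∈ [0, 1]. -/
open Real

/-- For `2 ≤ p < ∞`, the function `f_p(λ) = λ^(p-1) - λ² + λ - 1 + (1-λ)^p`
satisfies `1 + e^(-λ) f_p(λ) > 0` for all `λ ∈ [0,1]`. -/
theorem one_add_exp_neg_mul_fp_pos (p : ℝ) (hp : 2 ≤ p)
    (lam : ℝ) (h0 : 0 ≤ lam) (h1 : lam ≤ 1) :
    0 < 1 + Real.exp (-lam) *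
      (lam ^ (p - 1) - lam ^ 2 + lam - 1 + (1 - lam) ^ p) := by
  rcases eq_or_lt_of_le h0 with h | h
  · have hpne : p - 1 ≠ 0 := by intro h'; linarith
    simp [← h, Real.zero_rpow hpne, Real.one_rpow]
  · have h1' : Real.exp (-lam) < 1 := Real.exp_lt_one_iff.mpr (by linarith)
    have ha : (0:ℝ) ≤ lam ^ (p - 1) := Real.rpow_nonneg h0 _
    have hb : (0:ℝ) ≤ (1 - lam) ^ p := Real.rpow_nonneg (by linarith) _
    have hf : -1 ≤ lam ^ (p - 1) - lam ^ 2 + lam - 1 + (1 - lam) ^ p := by nlinarith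
    nlinarith [mul_nonneg (Real.exp_pos (-lam)).le
      (by linarith : (0:ℝ) ≤ lam ^ (p - 1) - lam ^ 2 + lam - 1 + (1 - lam) ^ p + 1)]
end

section
/- Let 1 ≤ p < 2 and let N be Poisson distributed with parameter 0 ≤ λ ≤ 1. Then λ^2 ≤ E|N − λ|^p · E|N − λ|^{4−p}, and hence, using the upper bound E|N−λ|^{4−p} ≤ c_{4−p} λ, one has E|N − λ|^p ≥ λ / c_{4−p}. -/
open MeasureTheory ProbabilityTheory Real
open scoped Nat

namespace PoissonCSAux

lemma hasSum_exp_aux (x : ℝ) : HasSum (fun n : ℕ => x ^ n / n !) (Real.exp x) := by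
  rw [Real.exp_eq_exp_ℝ]
  exact NormedSpace.expSeries_div_hasSum_exp x

lemma cube_le (n : ℕ) : (n + 1) ^ 3 ≤ 3 ^ (n + 1) := by
  induction n with
  | zero => norm_num
  | succ m ih =>
    rcases Nat.lt_or_ge m 2 with h | h
    · interval_cases m <;> norm_num
    · have h1 : (m + 2) ^ 3 ≤ 3 * (m + 1) ^ 3 := by nlinarith [h, Nat.mul_le_mul h h]
      calc (m + 1 + 1) ^ 3 ≤ 3 * (m + 1) ^ 3 := h1
        _ ≤ 3 * 3 ^ (m + 1) := by
            exact Nat.mul_le_mul_left 3 ih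
        _ = 3 ^ (m + 1 + 1) := by ring

lemma summable_dom : Summable (fun n : ℕ => (3 : ℝ) ^ (n + 1) / n !) := by
  have := (Real.summable_pow_div_factorial 3).mul_left 3
  refine this.congr fun n => ?_
  rw [pow_succ]
  ring

lemma summable_moment (lam : NNReal) (hlam : lam ≤ 1) {q : ℝ} (hq0 : 0 ≤ q) (hq3 : q ≤ 3) :
    Summable (fun n : ℕ => poissonPMFReal lam n * |(n : ℝ) - (lam : ℝ)| ^ q) := by
  have hl0 : (0 : ℝ) ≤ (lam : ℝ) := lam.coe_nonneg
  have hl1 : (lam : ℝ) ≤ 1 := by exact_mod_cast hlam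
  refine Summable.of_nonneg_of_le (fun n => ?_) (fun n => ?_) summable_dom
  · have := poissonPMFReal_nonneg (r := lam) (n := n)
    positivity
  · have hpmf : poissonPMFReal lam n ≤ 1 / n ! := by
      rw [poissonPMFReal]
      have h1 : Real.exp (-(lam : ℝ)) ≤ 1 := Real.exp_le_one_iff.2 (by linarith)
      have h2 : (lam : ℝ) ^ n ≤ 1 := pow_le_one₀ hl0 hl1
      have h3 : (0 : ℝ) < n ! := by positivity
      rw [div_le_div_iff₀ h3 h3]
      have h4 : Real.exp (-(lam : ℝ)) * (lam : ℝ) ^ n ≤ 1 :=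
        mul_le_one₀ h1 (pow_nonneg hl0 n) h2
      nlinarith [Real.exp_pos (-(lam : ℝ)), pow_nonneg hl0 n]
    have habs : |(n : ℝ) - (lam : ℝ)| ≤ (n : ℝ) + 1 := by
      rw [abs_le]; constructor <;> [linarith [Nat.cast_nonneg (α := ℝ) n]; linarith]
    have hb : |(n : ℝ) - (lam : ℝ)| ^ q ≤ (3 : ℝ) ^ (n + 1) := by
      calc |(n : ℝ) - (lam : ℝ)| ^ q ≤ ((n : ℝ) + 1) ^ q :=
            Real.rpow_le_rpow (abs_nonneg _) habs hq0
        _ ≤ ((n : ℝ) + 1) ^ (3 : ℝ) := by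
            apply Real.rpow_le_rpow_of_exponent_le _ hq3
            linarith [Nat.cast_nonneg (α := ℝ) n]
        _ = ((n : ℝ) + 1) ^ (3 : ℕ) := by
            rw [← Real.rpow_natCast ((n : ℝ) + 1) 3]; norm_num
        _ ≤ (3 : ℝ) ^ (n + 1) := by
            have := cube_le n
            calc ((n : ℝ) + 1) ^ (3 : ℕ) = ((n + 1 : ℕ) : ℝ) ^ (3 : ℕ) := by push_cast; ring
              _ ≤ ((3 ^ (n + 1) : ℕ) : ℝ) := by exact_mod_cast this
              _ = (3 : ℝ) ^ (n + 1) := by push_cast; ring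
    have h0 : (0 : ℝ) ≤ |(n : ℝ) - (lam : ℝ)| ^ q := Real.rpow_nonneg (abs_nonneg _) q
    have hfac : (0 : ℝ) < n ! := by positivity
    calc poissonPMFReal lam n * |(n : ℝ) - (lam : ℝ)| ^ q
        ≤ (1 / n !) * (3 : ℝ) ^ (n + 1) :=
          mul_le_mul hpmf hb h0 (by positivity)
      _ = (3 : ℝ) ^ (n + 1) / n ! := by ring

lemma integrable_moment (lam : NNReal) (hlam : lam ≤ 1) {q : ℝ} (hq0 : 0 ≤ q) (hq3 : q ≤ 3) :
    Integrable (fun n : ℕ => |(n : ℝ) - (lam : ℝ)| ^ q) (poissonMeasure lam) := by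
  constructor
  · exact (measurable_of_countable _).aestronglyMeasurable
  · rw [hasFiniteIntegral_iff_ofReal (ae_of_all _ fun n =>
      Real.rpow_nonneg (abs_nonneg _) q)]
    rw [lintegral_countable']
    have hterm : ∀ n : ℕ, ENNReal.ofReal (|(n : ℝ) - (lam : ℝ)| ^ q) * poissonMeasure lam {n}
        = ENNReal.ofReal (poissonPMFReal lam n * |(n : ℝ) - (lam : ℝ)| ^ q) := by
      intro n
      have hμ : poissonMeasure lam {n} = ENNReal.ofReal (poissonPMFReal lam n) := by
        rw [poissonMeasure_singleton]
        rfl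
      rw [hμ, ← ENNReal.ofReal_mul (Real.rpow_nonneg (abs_nonneg _) q), mul_comm]
    calc ∑' n : ℕ, ENNReal.ofReal (|(n : ℝ) - (lam : ℝ)| ^ q) * poissonMeasure lam {n}
        = ∑' n : ℕ, ENNReal.ofReal (poissonPMFReal lam n * |(n : ℝ) - (lam : ℝ)| ^ q) :=
          tsum_congr hterm
      _ = ENNReal.ofReal (∑' n : ℕ, poissonPMFReal lam n * |(n : ℝ) - (lam : ℝ)| ^ q) :=
          (ENNReal.ofReal_tsum_of_nonneg
            (fun n => mul_nonneg poissonPMFReal_nonneg (Real.rpow_nonneg (abs_nonneg _) q))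
            (summable_moment lam hlam hq0 hq3)).symm
      _ < ⊤ := ENNReal.ofReal_lt_top

lemma integral_moment_eq (lam : NNReal) (hlam : lam ≤ 1) {q : ℝ} (hq0 : 0 ≤ q) (hq3 : q ≤ 3) :
    (∫ n : ℕ, |(n : ℝ) - (lam : ℝ)| ^ q ∂(poissonMeasure lam))
      = ∑' n : ℕ, poissonPMFReal lam n * |(n : ℝ) - (lam : ℝ)| ^ q := by
  rw [integral_poissonMeasure]
  refine tsum_congr fun n => ?_
  rw [smul_eq_mul]
  congr 1

lemma second_moment (lam : NNReal) (hlam : lam ≤ 1) :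
    (∫ n : ℕ, |(n : ℝ) - (lam : ℝ)| ^ (2 : ℝ) ∂(poissonMeasure lam)) = (lam : ℝ) := by
  set l : ℝ := (lam : ℝ) with hl
  rw [integral_moment_eq lam hlam (by norm_num) (by norm_num)]
  have h0 : HasSum (fun n : ℕ => l ^ n / n !) (Real.exp l) := hasSum_exp_aux l
  have h1 : HasSum (fun n : ℕ => (n : ℝ) * (l ^ n / n !)) (l * Real.exp l) := by
    have key : HasSum (fun n : ℕ => ((n + 1 : ℕ) : ℝ) * (l ^ (n + 1) / (n + 1)!))
        (l * Real.exp l - ∑ i ∈ Finset.range 1, (i : ℝ) * (l ^ i / i !)) := by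
      have heq : (fun n : ℕ => ((n + 1 : ℕ) : ℝ) * (l ^ (n + 1) / (n + 1)!))
          = fun n : ℕ => l * (l ^ n / n !) := by
        funext n
        have : ((n + 1)! : ℝ) = (n + 1) * n ! := by
          rw [Nat.factorial_succ]; push_cast; ring
        rw [this]
        have hn : ((n : ℝ) + 1) ≠ 0 := by positivity
        have hf : (n ! : ℝ) ≠ 0 := by positivity
        push_cast
        field_simp
        ring
      rw [heq]
      simpa using h0.mul_left l
    exact (hasSum_nat_add_iff' 1).1 key
  have h2 : HasSum (fun n : ℕ => (n : ℝ) * ((n : ℝ) - 1) * (l ^ n / n !))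
      (l ^ 2 * Real.exp l) := by
    have heq : (fun n : ℕ => ((n + 2 : ℕ) : ℝ) * (((n + 2 : ℕ) : ℝ) - 1) *
        (l ^ (n + 2) / (n + 2)!)) = fun n : ℕ => l ^ 2 * (l ^ n / n !) := by
      funext n
      have hfe : ((n + 2)! : ℝ) = (n + 2) * ((n + 1) * n !) := by
        rw [Nat.factorial_succ, Nat.factorial_succ]; push_cast; ring
      rw [hfe]
      have hf : (n ! : ℝ) ≠ 0 := by positivity
      push_cast
      field_simp
      ring
    have hS : (∑ i ∈ Finset.range 2, (i : ℝ) * ((i : ℝ) - 1) * (l ^ i / i !)) = 0 := by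
      simp [Finset.sum_range_succ]
    refine (hasSum_nat_add_iff' 2).1 ?_
    rw [hS, sub_zero]
    show HasSum (fun n : ℕ => ((n + 2 : ℕ) : ℝ) * (((n + 2 : ℕ) : ℝ) - 1) *
        (l ^ (n + 2) / (n + 2)!)) _
    rw [heq]
    exact h0.mul_left (l ^ 2)
  have hfull : HasSum (fun n : ℕ => poissonPMFReal lam n * |(n : ℝ) - l| ^ (2 : ℝ)) l := by
    have hcomb : HasSum (fun n : ℕ =>
        Real.exp (-l) * ((n : ℝ) * ((n : ℝ) - 1) * (l ^ n / n !)
          + (1 - 2 * l) * ((n : ℝ) * (l ^ n / n !)) + l ^ 2 * (l ^ n / n !)))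
        (Real.exp (-l) * (l ^ 2 * Real.exp l + (1 - 2 * l) * (l * Real.exp l)
          + l ^ 2 * Real.exp l)) :=
      (((h2.add (h1.mul_left (1 - 2 * l))).add (h0.mul_left (l ^ 2))).mul_left (Real.exp (-l)))
    have hval : Real.exp (-l) * (l ^ 2 * Real.exp l + (1 - 2 * l) * (l * Real.exp l)
        + l ^ 2 * Real.exp l) = l := by
      rw [Real.exp_neg]
      field_simp [Real.exp_ne_zero]
      ring
    rw [hval] at hcomb
    refine hcomb.congr_fun fun n => ?_
    rw [poissonPMFReal]
    have habs : |(n : ℝ) - l| ^ (2 : ℝ) = ((n : ℝ) - l) ^ (2 : ℕ) := by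
      rw [show (2 : ℝ) = ((2 : ℕ) : ℝ) by norm_num, Real.rpow_natCast, sq_abs]
    rw [habs]
    have hf : (n ! : ℝ) ≠ 0 := by positivity
    field_simp
    ring
  exact hfull.tsum_eq

end PoissonCSAux

/-- Let `1 ≤ p < 2` and `N` Poisson with parameter `0 ≤ λ ≤ 1`. Then
`λ² ≤ E|N-λ|^p · E|N-λ|^(4-p)`, and hence, using an upper bound
`E|N-λ|^(4-p) ≤ c λ`, one has `E|N-λ|^p ≥ λ / c`. -/
theorem poisson_central_moment_lower_via_cauchy_schwarz
    (p : ℝ) (hp1 : 1 ≤ p) (hp2 : p < 2)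
    (c : ℝ) (hc : 0 < c)
    (hupper : ∀ lam : NNReal, lam ≤ 1 →
      (∫ n : ℕ, |(n : ℝ) - (lam : ℝ)| ^ (4 - p) ∂(poissonMeasure lam)) ≤ c * (lam : ℝ))
    (lam : NNReal) (hlam : lam ≤ 1) :
    (lam : ℝ) ^ 2 ≤
        (∫ n : ℕ, |(n : ℝ) - (lam : ℝ)| ^ p ∂(poissonMeasure lam)) *
          (∫ n : ℕ, |(n : ℝ) - (lam : ℝ)| ^ (4 - p) ∂(poissonMeasure lam)) ∧
      (lam : ℝ) / c ≤ ∫ n : ℕ, |(n : ℝ) - (lam : ℝ)| ^ p ∂(poissonMeasure lam) := by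
  set l : ℝ := (lam : ℝ) with hldef
  have hl0 : (0 : ℝ) ≤ l := lam.coe_nonneg
  set A := ∫ n : ℕ, |(n : ℝ) - l| ^ p ∂(poissonMeasure lam) with hA
  set B := ∫ n : ℕ, |(n : ℝ) - l| ^ (4 - p) ∂(poissonMeasure lam) with hB
  have hA0 : 0 ≤ A :=
    integral_nonneg fun n => Real.rpow_nonneg (abs_nonneg _) _
  have hB0 : 0 ≤ B :=
    integral_nonneg fun n => Real.rpow_nonneg (abs_nonneg _) _
  have hA_int := PoissonCSAux.integrable_moment lam hlam (q := p) (by linarith) (by linarith)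
  have hB_int := PoissonCSAux.integrable_moment lam hlam (q := 4 - p) (by linarith) (by linarith)
  -- Cauchy–Schwarz
  have hconj : Real.HolderConjugate 2 2 := Real.HolderConjugate.two_two
  have hmeasf : AEStronglyMeasurable (fun n : ℕ => |(n : ℝ) - l| ^ (p / 2))
      (poissonMeasure lam) := (measurable_of_countable _).aestronglyMeasurable
  have hmeasg : AEStronglyMeasurable (fun n : ℕ => |(n : ℝ) - l| ^ ((4 - p) / 2))
      (poissonMeasure lam) := (measurable_of_countable _).aestronglyMeasurable
  have hsqf : ∀ x : ℝ, (|x| ^ (p / 2)) ^ (2 : ℕ) = |x| ^ p := by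
    intro x
    rw [← Real.rpow_natCast (|x| ^ (p / 2)) 2, ← Real.rpow_mul (abs_nonneg _)]
    norm_num
  have hsqg : ∀ x : ℝ, (|x| ^ ((4 - p) / 2)) ^ (2 : ℕ) = |x| ^ (4 - p) := by
    intro x
    rw [← Real.rpow_natCast (|x| ^ ((4 - p) / 2)) 2, ← Real.rpow_mul (abs_nonneg _)]
    norm_num
  have hfmem : MemLp (fun n : ℕ => |(n : ℝ) - l| ^ (p / 2)) (ENNReal.ofReal 2)
      (poissonMeasure lam) := by
    rw [show ENNReal.ofReal 2 = 2 by norm_num, memLp_two_iff_integrable_sq hmeasf]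
    refine hA_int.congr ?_
    exact ae_of_all _ fun n => (hsqf _).symm
  have hgmem : MemLp (fun n : ℕ => |(n : ℝ) - l| ^ ((4 - p) / 2)) (ENNReal.ofReal 2)
      (poissonMeasure lam) := by
    rw [show ENNReal.ofReal 2 = 2 by norm_num, memLp_two_iff_integrable_sq hmeasg]
    refine hB_int.congr ?_
    exact ae_of_all _ fun n => (hsqg _).symm
  have hCS := integral_mul_le_Lp_mul_Lq_of_nonneg hconj
    (ae_of_all _ fun n => Real.rpow_nonneg (abs_nonneg _) _)
    (ae_of_all _ fun n => Real.rpow_nonneg (abs_nonneg _) _) hfmem hgmem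
  -- rewrite the three integrals in hCS
  have hprod : (∫ n : ℕ, |(n : ℝ) - l| ^ (p / 2) * |(n : ℝ) - l| ^ ((4 - p) / 2)
      ∂(poissonMeasure lam)) = l := by
    calc (∫ n : ℕ, |(n : ℝ) - l| ^ (p / 2) * |(n : ℝ) - l| ^ ((4 - p) / 2)
        ∂(poissonMeasure lam))
        = ∫ n : ℕ, |(n : ℝ) - l| ^ (2 : ℝ) ∂(poissonMeasure lam) := by
          refine integral_congr_ae (ae_of_all _ fun n => ?_)
          dsimp only
          have hsum : p / 2 + (4 - p) / 2 = 2 := by ring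
          rw [← Real.rpow_add' (abs_nonneg _) (by rw [hsum]; norm_num), hsum]
      _ = l := PoissonCSAux.second_moment lam hlam
  have hfint : (∫ n : ℕ, (|(n : ℝ) - l| ^ (p / 2)) ^ (2 : ℝ) ∂(poissonMeasure lam)) = A := by
    refine integral_congr_ae (ae_of_all _ fun n => ?_)
    dsimp only
    rw [← Real.rpow_mul (abs_nonneg _)]
    congr 1
    ring
  have hgint : (∫ n : ℕ, (|(n : ℝ) - l| ^ ((4 - p) / 2)) ^ (2 : ℝ) ∂(poissonMeasure lam)) = B := by
    refine integral_congr_ae (ae_of_all _ fun n => ?_)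
    dsimp only
    rw [← Real.rpow_mul (abs_nonneg _)]
    congr 1
    ring
  rw [hprod, hfint, hgint] at hCS
  -- hCS : l ≤ A ^ (1/2) * B ^ (1/2)
  have hu2 : (A ^ ((1 : ℝ) / 2)) ^ (2 : ℕ) = A := by
    rw [← Real.rpow_natCast (A ^ ((1 : ℝ) / 2)) 2, ← Real.rpow_mul hA0]
    norm_num
  have hv2 : (B ^ ((1 : ℝ) / 2)) ^ (2 : ℕ) = B := by
    rw [← Real.rpow_natCast (B ^ ((1 : ℝ) / 2)) 2, ← Real.rpow_mul hB0]
    norm_num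
  have hu0 : 0 ≤ A ^ ((1 : ℝ) / 2) := Real.rpow_nonneg hA0 _
  have hv0 : 0 ≤ B ^ ((1 : ℝ) / 2) := Real.rpow_nonneg hB0 _
  have hmain : l ^ 2 ≤ A * B := by
    nlinarith [hCS, hu2, hv2, hu0, hv0, hl0]
  refine ⟨hmain, ?_⟩
  rcases eq_or_lt_of_le hl0 with h0 | hpos
  · rw [← h0]
    simpa using hA0
  · have hBle : B ≤ c * l := hupper lam hlam
    rw [div_le_iff₀ hc]
    nlinarith [hmain, hA0, hB0, hBle, hpos]
end

section
/- Let 1 ≤ p < ∞, X a Banach space, and let ξ_1, …, ξ_n be independent mean-zero X-valued random variables in L^p. Then (E max_i ‖ξ_i‖_X^p)^{1/p} ≤ 2^{1+1/p} (E‖Σ_i ξ_i‖_X^p)^{1/p}. -/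
open MeasureTheory ProbabilityTheory Real

open scoped ENNReal NNReal symmDiff


lemma helper_rpow_add (p : ℝ) (hp : 1 ≤ p) {a b : ℝ} (ha : 0 ≤ a) (hb : 0 ≤ b) :
    (a + b) ^ p ≤ 2 ^ (p - 1) * (a ^ p + b ^ p) := by
  have h := NNReal.rpow_add_le_mul_rpow_add_rpow a.toNNReal b.toNNReal hp
  have h2 := (NNReal.coe_le_coe.2 h)
  push_cast at h2
  rwa [Real.coe_toNNReal a ha, Real.coe_toNNReal b hb] at h2

lemma helper_jensen_rpow {α : Type*} [MeasurableSpace α] {μ : Measure α}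
    [IsProbabilityMeasure μ] (p : ℝ) (hp : 1 ≤ p) {f : α → ℝ} (hf0 : ∀ x, 0 ≤ f x)
    (hf : Integrable f μ) (hfp : Integrable (fun x => f x ^ p) μ) :
    (∫ x, f x ∂μ) ^ p ≤ ∫ x, f x ^ p ∂μ := by
  have hp0 : (0:ℝ) < p := lt_of_lt_of_le one_pos hp
  have hcont : Continuous fun x : ℝ => x ^ p :=
    continuous_iff_continuousAt.2 fun x => Real.continuousAt_rpow_const x p (Or.inr hp0.le)
  exact (convexOn_rpow hp).map_integral_le hcont.continuousOn isClosed_Ici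
    (Filter.Eventually.of_forall fun x => hf0 x) hf hfp

lemma helper_key {X : Type} [NormedAddCommGroup X] [NormedSpace ℝ X] [CompleteSpace X]
    [MeasurableSpace X] [BorelSpace X] [SecondCountableTopology X]
    {Ω : Type} [MeasurableSpace Ω] {P : Measure Ω} [IsProbabilityMeasure P]
    (p : ℝ) (hp : 1 ≤ p) {A B : Ω → X} (hAm : Measurable A) (hBm : Measurable B)
    (hAB : IndepFun A B P) (hA : MemLp A (ENNReal.ofReal p) P)
    (hB : MemLp B (ENNReal.ofReal p) P) (hAmean : ∫ ω, A ω ∂P = 0) :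
    ∫ ω, ‖B ω‖ ^ p ∂P ≤ ∫ ω, ‖A ω + B ω‖ ^ p ∂P := by
  have hp0 : (0:ℝ) < p := lt_of_lt_of_le one_pos hp
  have hpne : (ENNReal.ofReal p) ≠ 0 := by
    simp only [ne_eq, ENNReal.ofReal_eq_zero, not_le]; exact hp0
  have hIN : ∀ {f : Ω → X}, MemLp f (ENNReal.ofReal p) P →
      Integrable (fun ω => ‖f ω‖ ^ p) P := by
    intro f hf
    have := hf.integrable_norm_rpow hpne ENNReal.ofReal_ne_top
    rwa [ENNReal.toReal_ofReal hp0.le] at this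
  have hone : (1:ℝ≥0∞) ≤ ENNReal.ofReal p := by
    rw [show (1:ℝ≥0∞) = ENNReal.ofReal 1 by simp]
    exact ENNReal.ofReal_le_ofReal hp
  have hAint : Integrable A P := hA.integrable hone
  set μ : Measure X := P.map B with hμ
  set ν : Measure X := P.map A with hν
  haveI : IsProbabilityMeasure μ := Measure.isProbabilityMeasure_map hBm.aemeasurable
  haveI : IsProbabilityMeasure ν := Measure.isProbabilityMeasure_map hAm.aemeasurable
  have hpairm : Measurable fun ω => (B ω, A ω) := hBm.prodMk hAm
  have hmap : P.map (fun ω => (B ω, A ω)) = μ.prod ν :=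
    (indepFun_iff_map_prod_eq_prod_map_map hBm.aemeasurable hAm.aemeasurable).1 hAB.symm
  set F : X × X → ℝ := fun q => ‖q.2 + q.1‖ ^ p with hF
  have hFc : Continuous F :=
    (continuous_snd.add continuous_fst).norm.rpow_const (fun x => Or.inr hp0.le)
  -- integrability of F on the product
  have hABi : Integrable (fun ω => ‖A ω + B ω‖ ^ p) P := hIN (hA.add hB)
  have hFi : Integrable F (μ.prod ν) := by
    rw [← hmap]
    exact (integrable_map_measure hFc.aestronglyMeasurable hpairm.aemeasurable).2 hABi
  -- equality 1
  have he1 : ∫ ω, ‖A ω + B ω‖ ^ p ∂P = ∫ b, ∫ a, ‖a + b‖ ^ p ∂ν ∂μ := by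
    rw [← integral_prod F hFi, ← hmap,
      integral_map hpairm.aemeasurable hFc.aestronglyMeasurable]
  -- equality 2
  have he2 : ∫ ω, ‖B ω‖ ^ p ∂P = ∫ b, ‖b‖ ^ p ∂μ := by
    rw [integral_map hBm.aemeasurable]
    exact (continuous_norm.rpow_const (fun x => Or.inr hp0.le)).aestronglyMeasurable
  -- facts about ν
  have hidν : Integrable (fun a : X => a) ν := by
    rw [hν]
    exact (integrable_map_measure (f := A) (g := id)
      stronglyMeasurable_id.aestronglyMeasurable hAm.aemeasurable).2 hAint
  have hmeanν : ∫ a, a ∂ν = 0 := by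
    rw [hν]
    exact (integral_map (f := id) hAm.aemeasurable
      stronglyMeasurable_id.aestronglyMeasurable).trans hAmean
  have hnormpν : Integrable (fun a : X => ‖a‖ ^ p) ν := by
    rw [hν, integrable_map_measure
      (continuous_norm.rpow_const (fun x => Or.inr hp0.le)).aestronglyMeasurable
      hAm.aemeasurable]
    exact hIN hA
  -- inner Jensen bound
  have hinner : ∀ b : X, ‖b‖ ^ p ≤ ∫ a, ‖a + b‖ ^ p ∂ν := by
    intro b
    have hintb : Integrable (fun a : X => ‖a + b‖) ν := by
      refine Integrable.mono' (hidν.norm.add (integrable_const ‖b‖))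
        ((continuous_id.add continuous_const).norm.aestronglyMeasurable) ?_
      refine Filter.Eventually.of_forall fun a => ?_
      rw [Real.norm_of_nonneg (norm_nonneg _)]
      exact norm_add_le _ _
    have hintbp : Integrable (fun a : X => ‖a + b‖ ^ p) ν := by
      refine Integrable.mono' (((hnormpν.add (integrable_const (‖b‖ ^ p))).const_mul
        (2 ^ (p - 1))))
        (((continuous_id.add continuous_const).norm.rpow_const
          (fun x => Or.inr hp0.le)).aestronglyMeasurable) ?_
      refine Filter.Eventually.of_forall fun a => ?_
      rw [Real.norm_of_nonneg (Real.rpow_nonneg (norm_nonneg _) _)]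
      calc ‖a + b‖ ^ p ≤ (‖a‖ + ‖b‖) ^ p :=
            Real.rpow_le_rpow (norm_nonneg _) (norm_add_le _ _) hp0.le
        _ ≤ 2 ^ (p - 1) * (‖a‖ ^ p + ‖b‖ ^ p) :=
            helper_rpow_add p hp (norm_nonneg _) (norm_nonneg _)
    have hb1 : ‖b‖ ≤ ∫ a, ‖a + b‖ ∂ν := by
      have : (∫ a, (a + b) ∂ν) = b := by
        rw [integral_add hidν (integrable_const b), hmeanν, integral_const]
        simp
      calc ‖b‖ = ‖∫ a, (a + b) ∂ν‖ := by rw [this]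
        _ ≤ ∫ a, ‖a + b‖ ∂ν := norm_integral_le_integral_norm _
    calc ‖b‖ ^ p ≤ (∫ a, ‖a + b‖ ∂ν) ^ p :=
          Real.rpow_le_rpow (norm_nonneg _) hb1 hp0.le
      _ ≤ ∫ a, ‖a + b‖ ^ p ∂ν :=
          helper_jensen_rpow p hp (fun a => norm_nonneg _) hintb hintbp
  -- outer monotonicity
  rw [he1, he2]
  refine integral_mono_of_nonneg
    (Filter.Eventually.of_forall fun b => Real.rpow_nonneg (norm_nonneg _) _)
    ?_ (Filter.Eventually.of_forall fun b => hinner b)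
  exact hFi.integral_prod_left

lemma helper_det {X : Type} [NormedAddCommGroup X] [NormedSpace ℝ X]
    (p : ℝ) (hp : 1 ≤ p) {n : ℕ} (v : Fin n → X) (i : Fin n) :
    (2 ^ n : ℝ) * ‖v i‖ ^ p ≤
      2 * ∑ s : Finset (Fin n), ‖∑ j ∈ sᶜ, v j - ∑ j ∈ s, v j‖ ^ p := by
  classical
  have hp0 : (0:ℝ) < p := lt_of_lt_of_le one_pos hp
  set W : Finset (Fin n) → X := fun s => ∑ j ∈ sᶜ, v j - ∑ j ∈ s, v j with hWdef
  have hWs : ∀ s : Finset (Fin n), W s = ∑ j, (if j ∈ s then (-1:ℝ) else 1) • v j := by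
    intro s
    rw [← Finset.sum_add_sum_compl s (fun j => (if j ∈ s then (-1:ℝ) else 1) • v j)]
    rw [Finset.sum_congr rfl (fun j hj => by rw [if_pos hj, neg_one_smul]),
      Finset.sum_congr (rfl : sᶜ = sᶜ)
        (fun j hj => by rw [if_neg (Finset.mem_compl.1 hj), one_smul])]
    rw [Finset.sum_neg_distrib]
    simp only [hWdef]
    abel_nf
  have hkey : ∀ s : Finset (Fin n),
      W s + W (s ∆ ({i}ᶜ : Finset (Fin n))) = (2 * (if i ∈ s then (-1:ℝ) else 1)) • v i := by
    intro s
    rw [hWs, hWs, ← Finset.sum_add_distrib]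
    have hterm : ∀ j : Fin n,
        ((if j ∈ s then (-1:ℝ) else 1) • v j
          + (if j ∈ s ∆ ({i}ᶜ : Finset (Fin n)) then (-1:ℝ) else 1) • v j)
        = if j = i then (2 * (if i ∈ s then (-1:ℝ) else 1)) • v j else 0 := by
      intro j
      by_cases hji : j = i
      · subst hji
        have hm : j ∈ s ∆ ({j}ᶜ : Finset (Fin n)) ↔ j ∈ s := by
          simp [Finset.mem_symmDiff]
        rw [if_pos rfl, ← add_smul]
        by_cases hjs : j ∈ s
        · rw [if_pos hjs, if_pos (hm.2 hjs)]; congr 1; ring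
        · rw [if_neg hjs, if_neg (fun h => hjs (hm.1 h))]; congr 1; ring
      · have hm : j ∈ s ∆ ({i}ᶜ : Finset (Fin n)) ↔ j ∉ s := by
          simp [Finset.mem_symmDiff, hji]
        rw [if_neg hji, ← add_smul]
        by_cases hjs : j ∈ s
        · rw [if_pos hjs, if_neg (fun h => (hm.1 h) hjs)]; norm_num
        · rw [if_neg hjs, if_pos (hm.2 hjs)]; norm_num
    rw [Finset.sum_congr rfl (fun j _ => hterm j), Finset.sum_ite_eq' Finset.univ i]
    simp
  have hps : ∀ s : Finset (Fin n),
      ‖v i‖ ^ p ≤ ‖W s‖ ^ p + ‖W (s ∆ ({i}ᶜ : Finset (Fin n)))‖ ^ p := by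
    intro s
    have h2 : 2 * ‖v i‖ ≤ ‖W s‖ + ‖W (s ∆ ({i}ᶜ : Finset (Fin n)))‖ := by
      have : ‖W s + W (s ∆ ({i}ᶜ : Finset (Fin n)))‖ = 2 * ‖v i‖ := by
        rw [hkey s, norm_smul]
        by_cases hjs : i ∈ s <;> simp [hjs, abs_of_nonneg]
      rw [← this]; exact norm_add_le _ _
    rcases le_or_gt ‖v i‖ ‖W s‖ with h | h
    · exact le_add_of_le_of_nonneg (Real.rpow_le_rpow (norm_nonneg _) h hp0.le)
        (Real.rpow_nonneg (norm_nonneg _) _)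
    · have h' : ‖v i‖ ≤ ‖W (s ∆ ({i}ᶜ : Finset (Fin n)))‖ := by linarith
      exact le_add_of_nonneg_of_le (Real.rpow_nonneg (norm_nonneg _) _)
        (Real.rpow_le_rpow (norm_nonneg _) h' hp0.le)
  have hinv : Function.Involutive (fun s : Finset (Fin n) => s ∆ ({i}ᶜ : Finset (Fin n))) :=
    fun s => symmDiff_symmDiff_cancel_right _ _
  set σ : Equiv.Perm (Finset (Fin n)) := Function.Involutive.toPerm _ hinv with hσ
  calc (2 ^ n : ℝ) * ‖v i‖ ^ p = ∑ _s : Finset (Fin n), ‖v i‖ ^ p := by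
        rw [Finset.sum_const, Finset.card_univ, Fintype.card_finset, Fintype.card_fin,
          nsmul_eq_mul]
        push_cast
        ring
    _ ≤ ∑ s : Finset (Fin n), (‖W s‖ ^ p + ‖W (s ∆ ({i}ᶜ : Finset (Fin n)))‖ ^ p) :=
        Finset.sum_le_sum fun s _ => hps s
    _ = ∑ s : Finset (Fin n), ‖W s‖ ^ p
        + ∑ s : Finset (Fin n), ‖W (σ s)‖ ^ p := by
        rw [Finset.sum_add_distrib]; rfl
    _ = 2 * ∑ s : Finset (Fin n), ‖W s‖ ^ p := by
        rw [Equiv.sum_comp σ (fun s => ‖W s‖ ^ p)]; ring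

theorem aux_main (p : ℝ) (hp : 1 ≤ p)
    (X : Type) [NormedAddCommGroup X] [NormedSpace ℝ X] [CompleteSpace X]
    [MeasurableSpace X] [BorelSpace X] [SecondCountableTopology X]
    (Ω : Type) [MeasurableSpace Ω] (P : Measure Ω) [IsProbabilityMeasure P]
    (n : ℕ) (ξ : Fin n → Ω → X)
    (hmeas : ∀ i, Measurable (ξ i))
    (hindep : iIndepFun ξ P)
    (hint : ∀ i, Integrable (ξ i) P)
    (hmean : ∀ i, ∫ ω, ξ i ω ∂P = 0)
    (hLp : ∀ i, MemLp (ξ i) (ENNReal.ofReal p) P) :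
    (∫ ω, (⨆ i, ‖ξ i ω‖) ^ p ∂P) ^ (1/p) ≤
      (2:ℝ) ^ (1 + 1/p) * (∫ ω, ‖∑ i, ξ i ω‖ ^ p ∂P) ^ (1/p) := by
  classical
  have hp0 : (0:ℝ) < p := lt_of_lt_of_le one_pos hp
  have hpne : (ENNReal.ofReal p) ≠ 0 := by
    simp only [ne_eq, ENNReal.ofReal_eq_zero, not_le]; exact hp0
  have hIN : ∀ {f : Ω → X}, MemLp f (ENNReal.ofReal p) P →
      Integrable (fun ω => ‖f ω‖ ^ p) P := by
    intro f hf
    have := hf.integrable_norm_rpow hpne ENNReal.ofReal_ne_top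
    rwa [ENNReal.toReal_ofReal hp0.le] at this
  have hSnn : 0 ≤ ∫ ω, ‖∑ i, ξ i ω‖ ^ p ∂P :=
    integral_nonneg fun ω => Real.rpow_nonneg (norm_nonneg _) _
  rcases Nat.eq_zero_or_pos n with hn | hn
  · subst hn
    rw [show (fun ω => (⨆ i : Fin 0, ‖ξ i ω‖) ^ p) = fun _ => (0:ℝ) by
      funext ω; rw [iSup_of_empty', Real.sSup_empty, Real.zero_rpow hp0.ne']]
    rw [integral_const]
    simp only [smul_eq_mul, mul_zero]
    rw [Real.zero_rpow (by positivity : (1:ℝ)/p ≠ 0)]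
    positivity
  haveI : Nonempty (Fin n) := Fin.pos_iff_nonempty.1 hn
  -- MemLp of partial sums
  have hMem : ∀ t : Finset (Fin n),
      MemLp (fun ω => ∑ j ∈ t, ξ j ω) (ENNReal.ofReal p) P :=
    fun t => memLp_finset_sum t fun j _ => hLp j
  have hMemW : ∀ s : Finset (Fin n),
      MemLp (fun ω => ∑ j ∈ sᶜ, ξ j ω - ∑ j ∈ s, ξ j ω) (ENNReal.ofReal p) P :=
    fun s => (hMem sᶜ).sub (hMem s)
  -- Step C : per sign pattern bound
  have hC : ∀ s : Finset (Fin n),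
      ∫ ω, ‖∑ j ∈ sᶜ, ξ j ω - ∑ j ∈ s, ξ j ω‖ ^ p ∂P
        ≤ 2 ^ p * ∫ ω, ‖∑ i, ξ i ω‖ ^ p ∂P := by
    intro s
    set A : Ω → X := fun ω => ∑ j ∈ sᶜ, ξ j ω with hA
    set B : Ω → X := fun ω => ∑ j ∈ s, ξ j ω with hB
    have hAm : Measurable A := Finset.measurable_sum _ fun j _ => hmeas j
    have hBm : Measurable B := Finset.measurable_sum _ fun j _ => hmeas j
    have hindAB : IndepFun A B P := by
      have h0 := hindep.indepFun_finset sᶜ s disjoint_compl_left hmeas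
      have hφ : Measurable (fun v : (↥(sᶜ) → X) => ∑ j, v j) :=
        Finset.measurable_sum _ fun j _ => measurable_pi_apply j
      have hψ : Measurable (fun v : (↥s → X) => ∑ j, v j) :=
        Finset.measurable_sum _ fun j _ => measurable_pi_apply j
      have h := h0.comp hφ hψ
      have hA' : A = (fun v : (↥(sᶜ) → X) => ∑ j, v j)
          ∘ (fun a (i : ↥(sᶜ)) => ξ i a) := by
        funext ω; exact (Finset.sum_coe_sort sᶜ (fun j => ξ j ω)).symm
      have hB' : B = (fun v : (↥s → X) => ∑ j, v j)
          ∘ (fun a (i : ↥s) => ξ i a) := by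
        funext ω; exact (Finset.sum_coe_sort s (fun j => ξ j ω)).symm
      rw [hA', hB']; exact h
    have hmeanA : ∫ ω, A ω ∂P = 0 := by
      rw [hA, integral_finset_sum _ fun j _ => hint j]
      simp [hmean]
    have hmeanB : ∫ ω, B ω ∂P = 0 := by
      rw [hB, integral_finset_sum _ fun j _ => hint j]
      simp [hmean]
    have hsum1 : ∀ ω, B ω + A ω = ∑ i, ξ i ω :=
      fun ω => Finset.sum_add_sum_compl s (fun j => ξ j ω)
    have hsum2 : ∀ ω, A ω + B ω = ∑ i, ξ i ω := by
      intro ω; rw [add_comm]; exact hsum1 ω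
    have hcong1 : (fun ω => ‖B ω + A ω‖ ^ p) =ᵐ[P] (fun ω => ‖∑ i, ξ i ω‖ ^ p) :=
      Filter.Eventually.of_forall fun ω => congrArg (fun x : X => ‖x‖ ^ p) (hsum1 ω)
    have hcong2 : (fun ω => ‖A ω + B ω‖ ^ p) =ᵐ[P] (fun ω => ‖∑ i, ξ i ω‖ ^ p) :=
      Filter.Eventually.of_forall fun ω => congrArg (fun x : X => ‖x‖ ^ p) (hsum2 ω)
    have h1 : ∫ ω, ‖A ω‖ ^ p ∂P ≤ ∫ ω, ‖∑ i, ξ i ω‖ ^ p ∂P := by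
      have := helper_key p hp hBm hAm hindAB.symm (hMem s) (hMem sᶜ) hmeanB
      rwa [integral_congr_ae hcong1] at this
    have h2 : ∫ ω, ‖B ω‖ ^ p ∂P ≤ ∫ ω, ‖∑ i, ξ i ω‖ ^ p ∂P := by
      have := helper_key p hp hAm hBm hindAB (hMem sᶜ) (hMem s) hmeanA
      rwa [integral_congr_ae hcong2] at this
    have hpt : ∀ ω, ‖A ω - B ω‖ ^ p ≤ 2 ^ (p-1) * (‖A ω‖ ^ p + ‖B ω‖ ^ p) := by
      intro ω
      calc ‖A ω - B ω‖ ^ p ≤ (‖A ω‖ + ‖B ω‖) ^ p :=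
            Real.rpow_le_rpow (norm_nonneg _) (norm_sub_le _ _) hp0.le
        _ ≤ 2 ^ (p-1) * (‖A ω‖ ^ p + ‖B ω‖ ^ p) :=
            helper_rpow_add p hp (norm_nonneg _) (norm_nonneg _)
    calc ∫ ω, ‖A ω - B ω‖ ^ p ∂P
        ≤ ∫ ω, 2 ^ (p-1) * (‖A ω‖ ^ p + ‖B ω‖ ^ p) ∂P := by
          refine integral_mono_of_nonneg
            (Filter.Eventually.of_forall fun ω => Real.rpow_nonneg (norm_nonneg _) _)
            (((hIN (hMem sᶜ)).add (hIN (hMem s))).const_mul _)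
            (Filter.Eventually.of_forall fun ω => hpt ω)
      _ = 2 ^ (p-1) * (∫ ω, ‖A ω‖ ^ p ∂P + ∫ ω, ‖B ω‖ ^ p ∂P) := by
          rw [integral_const_mul, integral_add (hIN (hMem sᶜ)) (hIN (hMem s))]
      _ ≤ 2 ^ (p-1) * (2 * ∫ ω, ‖∑ i, ξ i ω‖ ^ p ∂P) := by
          have h2p : (0:ℝ) < 2 ^ (p-1) := Real.rpow_pos_of_pos two_pos _
          nlinarith [h1, h2]
      _ = 2 ^ p * ∫ ω, ‖∑ i, ξ i ω‖ ^ p ∂P := by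
          rw [show (2:ℝ) ^ p = 2 ^ (p-1) * 2 by
            rw [← Real.rpow_add_one two_ne_zero (p-1)]; ring_nf]
          ring
  -- Step A : pointwise bound by symmetrized sums
  have hptw : ∀ ω, (⨆ i, ‖ξ i ω‖) ^ p
      ≤ (2 / 2 ^ n) * ∑ s : Finset (Fin n), ‖∑ j ∈ sᶜ, ξ j ω - ∑ j ∈ s, ξ j ω‖ ^ p := by
    intro ω
    obtain ⟨i₀, hi₀⟩ := Finite.exists_max (fun i => ‖ξ i ω‖)
    have hsupnn : (0:ℝ) ≤ ⨆ i, ‖ξ i ω‖ := Real.iSup_nonneg fun i => norm_nonneg _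
    have hsup : (⨆ i, ‖ξ i ω‖) ≤ ‖ξ i₀ ω‖ := ciSup_le hi₀
    have h2n : (0:ℝ) < 2 ^ n := by positivity
    have hd := helper_det p hp (fun i => ξ i ω) i₀
    calc (⨆ i, ‖ξ i ω‖) ^ p ≤ ‖ξ i₀ ω‖ ^ p :=
          Real.rpow_le_rpow hsupnn hsup hp0.le
      _ ≤ (2 / 2 ^ n) * ∑ s : Finset (Fin n), ‖∑ j ∈ sᶜ, ξ j ω - ∑ j ∈ s, ξ j ω‖ ^ p := by
          rw [div_mul_eq_mul_div, le_div_iff₀ h2n, mul_comm]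
          exact hd
  -- integrate
  have htot : ∫ ω, (⨆ i, ‖ξ i ω‖) ^ p ∂P
      ≤ 2 ^ (p+1) * ∫ ω, ‖∑ i, ξ i ω‖ ^ p ∂P := by
    have hintW : Integrable
        (fun ω => (2 / 2 ^ n) * ∑ s : Finset (Fin n),
          ‖∑ j ∈ sᶜ, ξ j ω - ∑ j ∈ s, ξ j ω‖ ^ p) P :=
      (integrable_finset_sum _ fun s _ => hIN (hMemW s)).const_mul _
    have step1 : ∫ ω, (⨆ i, ‖ξ i ω‖) ^ p ∂P
        ≤ (2 / 2 ^ n) * ∑ s : Finset (Fin n),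
            ∫ ω, ‖∑ j ∈ sᶜ, ξ j ω - ∑ j ∈ s, ξ j ω‖ ^ p ∂P := by
      rw [← integral_finset_sum _ fun s _ => hIN (hMemW s), ← integral_const_mul]
      exact integral_mono_of_nonneg
        (Filter.Eventually.of_forall fun ω =>
          Real.rpow_nonneg (Real.iSup_nonneg fun i => norm_nonneg _) _)
        hintW (Filter.Eventually.of_forall fun ω => hptw ω)
    have step2 : ∑ s : Finset (Fin n),
        ∫ ω, ‖∑ j ∈ sᶜ, ξ j ω - ∑ j ∈ s, ξ j ω‖ ^ p ∂P
        ≤ (2 ^ n : ℝ) * (2 ^ p * ∫ ω, ‖∑ i, ξ i ω‖ ^ p ∂P) := by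
      calc ∑ s : Finset (Fin n), ∫ ω, ‖∑ j ∈ sᶜ, ξ j ω - ∑ j ∈ s, ξ j ω‖ ^ p ∂P
          ≤ ∑ _s : Finset (Fin n), 2 ^ p * ∫ ω, ‖∑ i, ξ i ω‖ ^ p ∂P :=
            Finset.sum_le_sum fun s _ => hC s
        _ = (2 ^ n : ℝ) * (2 ^ p * ∫ ω, ‖∑ i, ξ i ω‖ ^ p ∂P) := by
            rw [Finset.sum_const, Finset.card_univ, Fintype.card_finset, Fintype.card_fin,
              nsmul_eq_mul]
            push_cast; ring
    have h2n : (0:ℝ) < 2 ^ n := by positivity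
    calc ∫ ω, (⨆ i, ‖ξ i ω‖) ^ p ∂P
        ≤ (2 / 2 ^ n) * ((2 ^ n : ℝ) * (2 ^ p * ∫ ω, ‖∑ i, ξ i ω‖ ^ p ∂P)) := by
          refine le_trans step1 ?_
          exact mul_le_mul_of_nonneg_left step2 (by positivity)
      _ = 2 ^ (p+1) * ∫ ω, ‖∑ i, ξ i ω‖ ^ p ∂P := by
          rw [Real.rpow_add_one two_ne_zero p]
          field_simp
  -- final rpow manipulation
  have hI0 : 0 ≤ ∫ ω, (⨆ i, ‖ξ i ω‖) ^ p ∂P :=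
    integral_nonneg fun ω => Real.rpow_nonneg (Real.iSup_nonneg fun i => norm_nonneg _) _
  calc (∫ ω, (⨆ i, ‖ξ i ω‖) ^ p ∂P) ^ (1/p)
      ≤ (2 ^ (p+1) * ∫ ω, ‖∑ i, ξ i ω‖ ^ p ∂P) ^ (1/p) :=
        Real.rpow_le_rpow hI0 htot (by positivity)
    _ = (2:ℝ) ^ (1 + 1/p) * (∫ ω, ‖∑ i, ξ i ω‖ ^ p ∂P) ^ (1/p) := by
        rw [Real.mul_rpow (by positivity) hSnn,
          ← Real.rpow_mul (by norm_num : (0:ℝ) ≤ 2)]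
        congr 1
        field_simp


/-- For independent mean-zero `X`-valued random variables `ξ_1, …, ξ_n` in `L^p`
(`1 ≤ p < ∞`, `X` a Banach space),
`(E max_i ‖ξ_i‖^p)^{1/p} ≤ 2^{1+1/p} (E ‖∑ ξ_i‖^p)^{1/p}`. -/
theorem max_moment_le_sum_moment (p : ℝ) (hp : 1 ≤ p)
    (X : Type) [NormedAddCommGroup X] [NormedSpace ℝ X] [CompleteSpace X]
    [MeasurableSpace X] [BorelSpace X]
    (Ω : Type) [MeasurableSpace Ω] (P : Measure Ω) [IsProbabilityMeasure P]
    (n : ℕ) (ξ : Fin n → Ω → X)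
    (hmeas : ∀ i, Measurable (ξ i))
    (hindep : iIndepFun ξ P)
    (hint : ∀ i, Integrable (ξ i) P)
    (hmean : ∀ i, ∫ ω, ξ i ω ∂P = 0)
    (hLp : ∀ i, MemLp (ξ i) (ENNReal.ofReal p) P) :
    (∫ ω, (⨆ i, ‖ξ i ω‖) ^ p ∂P) ^ (1/p) ≤
      (2:ℝ) ^ (1 + 1/p) * (∫ ω, ‖∑ i, ξ i ω‖ ^ p ∂P) ^ (1/p) := by
  classical
  -- strongly measurable a.e. modifications
  set g : Fin n → Ω → X := fun i => (hLp i).1.mk (ξ i) with hgdef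
  have hgsm : ∀ i, StronglyMeasurable (g i) := fun i => (hLp i).1.stronglyMeasurable_mk
  have hgeq : ∀ i, ξ i =ᵐ[P] g i := fun i => (hLp i).1.ae_eq_mk
  -- the separable closed submodule
  set Y : Submodule ℝ X := (Submodule.span ℝ (⋃ i, Set.range (g i))).topologicalClosure
    with hYdef
  have hYclosed : IsClosed (Y : Set X) := Submodule.isClosed_topologicalClosure _
  have hYsep : TopologicalSpace.IsSeparable (Y : Set X) := by
    have h1 : TopologicalSpace.IsSeparable (⋃ i, Set.range (g i)) :=
      TopologicalSpace.IsSeparable.iUnion fun i => (hgsm i).isSeparable_range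
    rw [hYdef, Submodule.topologicalClosure_coe]
    exact h1.span.closure
  haveI hsepY : TopologicalSpace.SeparableSpace Y := hYsep.separableSpace
  haveI : SecondCountableTopology Y := UniformSpace.secondCountable_of_separable Y
  haveI : CompleteSpace Y := hYclosed.completeSpace_coe
  haveI : BorelSpace Y := Subtype.borelSpace (Y : Set X)
  have hmemY : ∀ i ω, g i ω ∈ Y := fun i ω =>
    Submodule.le_topologicalClosure _
      (Submodule.subset_span (Set.mem_iUnion.2 ⟨i, Set.mem_range_self ω⟩))
  -- the measurable retraction onto Y
  set φ : X → Y := fun x => if h : x ∈ (Y : Set X) then (⟨x, h⟩ : Y) else 0 with hφdef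
  have hφm : Measurable φ := by
    have h1 : Measurable (fun z : (Y : Set X) => (⟨z.1, z.2⟩ : Y)) := measurable_id
    have h2 : Measurable (fun _ : ((Y : Set X)ᶜ : Set X) => (0 : Y)) := measurable_const
    exact Measurable.dite h1 h2 hYclosed.measurableSet
  set η : Fin n → Ω → Y := fun i ω => φ (ξ i ω) with hηdef
  have hηmeas : ∀ i, Measurable (η i) := fun i => hφm.comp (hmeas i)
  have hηindep : iIndepFun η P :=
    hindep.comp (fun _ => φ) (fun _ => hφm)
  -- a.e. identification
  have hae : ∀ i, ∀ᵐ ω ∂P, (η i ω : X) = ξ i ω := by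
    intro i
    filter_upwards [hgeq i] with ω hω
    rw [hηdef]
    simp only
    rw [hω]
    simp only [hφdef]
    split_ifs with h
    · rfl
    · exact absurd (hmemY i ω) h
  have hηnorm : ∀ i, ∀ᵐ ω ∂P, ‖η i ω‖ = ‖ξ i ω‖ := by
    intro i
    filter_upwards [hae i] with ω hω
    rw [← hω]
    rfl
  have hηaesm : ∀ i, AEStronglyMeasurable (η i) P := fun i =>
    (hηmeas i).stronglyMeasurable.aestronglyMeasurable
  have hηint : ∀ i, Integrable (η i) P := by
    intro i
    refine Integrable.mono' (hint i).norm (hηaesm i) ?_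
    filter_upwards [hηnorm i] with ω hω
    rw [hω]
  have hηLp : ∀ i, MemLp (η i) (ENNReal.ofReal p) P := by
    intro i
    refine MemLp.of_le (hLp i) (hηaesm i) ?_
    filter_upwards [hηnorm i] with ω hω
    rw [hω]
  have hηmean : ∀ i, ∫ ω, η i ω ∂P = 0 := by
    intro i
    have hj := ContinuousLinearMap.integral_comp_comm (Y.subtypeL) (hηint i)
    have hval : ∫ ω, Y.subtypeL (η i ω) ∂P = 0 := by
      have hc : (fun ω => Y.subtypeL (η i ω)) =ᵐ[P] ξ i := by
        filter_upwards [hae i] with ω hω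
        exact hω
      rw [integral_congr_ae hc]
      exact hmean i
    have h0 : Y.subtypeL (∫ ω, η i ω ∂P) = Y.subtypeL 0 := by
      rw [← hj, hval, map_zero]
    exact Subtype.coe_injective h0
  -- apply the aux theorem and transfer
  have haux := aux_main p hp Y Ω P n η hηmeas hηindep hηint hηmean hηLp
  have hall : ∀ᵐ ω ∂P, ∀ i, (η i ω : X) = ξ i ω := (ae_all_iff).2 hae
  have heq1 : ∫ ω, (⨆ i, ‖η i ω‖) ^ p ∂P = ∫ ω, (⨆ i, ‖ξ i ω‖) ^ p ∂P := by
    refine integral_congr_ae ?_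
    filter_upwards [hall] with ω hω
    have : ∀ i, ‖η i ω‖ = ‖ξ i ω‖ := fun i => by rw [← hω i]; rfl
    simp only [this]
  have heq2 : ∫ ω, ‖∑ i, η i ω‖ ^ p ∂P = ∫ ω, ‖∑ i, ξ i ω‖ ^ p ∂P := by
    refine integral_congr_ae ?_
    filter_upwards [hall] with ω hω
    have hs : ((∑ i, η i ω : Y) : X) = ∑ i, ξ i ω := by
      push_cast
      exact Finset.sum_congr rfl fun i _ => hω i
    have : ‖(∑ i, η i ω : Y)‖ = ‖∑ i, ξ i ω‖ := by
      rw [show ‖(∑ i, η i ω : Y)‖ = ‖((∑ i, η i ω : Y) : X)‖ from rfl, hs]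
    rw [this]
  rw [← heq1, ← heq2]
  exact haux
end

section
/- Let 1 ≤ p < ∞ and let f_1, …, f_n be independent nonnegative real random variables in L^p. Then (E(Σ_i f_i)^p)^{1/p} ≤ C_p max{ (Σ_i E f_i^p)^{1/p}, Σ_i E f_i } for a constant C_p depending only on p. -/
open MeasureTheory ProbabilityTheory Real


lemma ros_aux1 {p : ℝ} (hp : 1 ≤ p) {x y : ℝ} (hx : 0 ≤ x) (hy : 0 ≤ y) :
    (x + y) ^ p ≤ x ^ p + p * (x + y) ^ (p - 1) * y := by
  rcases eq_or_lt_of_le (add_nonneg hx hy) with h | h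
  · rw [← h]
    have h0 : (0:ℝ) ^ p = 0 := Real.zero_rpow (by linarith)
    have hx0 : x = 0 := by nlinarith
    have hy0 : y = 0 := by nlinarith
    rw [h0, hx0, hy0, Real.zero_rpow (by positivity : p ≠ (0:ℝ))]
    simp
  · set a := x + y with ha
    have hb : -1 ≤ x / a - 1 := by
      have : 0 ≤ x / a := div_nonneg hx h.le
      linarith
    have hber := one_add_mul_self_le_rpow_one_add hb hp
    rw [add_sub_cancel] at hber
    have hdiv : (x / a) ^ p = x ^ p / a ^ p := Real.div_rpow hx h.le p
    rw [hdiv] at hber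
    have hap : 0 < a ^ p := Real.rpow_pos_of_pos h p
    have key : (1 + p * (x / a - 1)) * a ^ p ≤ x ^ p := by
      calc (1 + p * (x / a - 1)) * a ^ p ≤ (x ^ p / a ^ p) * a ^ p := by
            exact mul_le_mul_of_nonneg_right hber hap.le
        _ = x ^ p := by field_simp
    have hxa : x / a - 1 = -(y / a) := by
      have hne : x + y ≠ 0 := by linarith
      rw [ha, div_sub_one hne, ← neg_div]; congr 1; ring
    rw [hxa] at key
    have hsub : a ^ (p - 1) = a ^ p / a := by
      rw [Real.rpow_sub h, Real.rpow_one]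
    have : a ^ p - p * (a ^ p / a) * y ≤ x ^ p := by
      have : (1 + p * -(y / a)) * a ^ p = a ^ p - p * (a ^ p / a) * y := by ring
      linarith [key, this ▸ key]
    rw [hsub]
    linarith

lemma ros_aux2 {q : ℝ} (hq : 0 ≤ q) {x y : ℝ} (hx : 0 ≤ x) (hy : 0 ≤ y) :
    (x + y) ^ q ≤ 2 ^ q * (x ^ q + y ^ q) := by
  have key : ∀ z w : ℝ, 0 ≤ z → z ≤ w → (z + w) ^ q ≤ 2 ^ q * (z ^ q + w ^ q) := by
    intro z w hz hzw
    have hw : 0 ≤ w := hz.trans hzw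
    calc (z + w) ^ q ≤ (2 * w) ^ q := by
          apply Real.rpow_le_rpow (by linarith) (by linarith) hq
      _ = 2 ^ q * w ^ q := Real.mul_rpow (by norm_num) hw
      _ ≤ 2 ^ q * (z ^ q + w ^ q) := by
          have h2 : (0:ℝ) ≤ 2 ^ q := Real.rpow_nonneg (by norm_num) q
          have hzq : 0 ≤ z ^ q := Real.rpow_nonneg hz q
          nlinarith
  rcases le_total x y with h | h
  · exact key x y hx h
  · have := key y x hy h
    rw [add_comm y x, add_comm (y^q)] at this
    exact this

lemma ros_aux3 {p : ℝ} (hp : 1 ≤ p) {x y : ℝ} (hx : 0 ≤ x) (hy : 0 ≤ y) :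
    (x + y) ^ p ≤ x ^ p + p * 2 ^ (p - 1) * (x ^ (p - 1) * y + y ^ p) := by
  have h1 := ros_aux1 hp hx hy
  have h2 := ros_aux2 (by linarith : (0:ℝ) ≤ p - 1) hx hy
  have hyp : y ^ (p - 1) * y ≤ y ^ p := by
    rcases eq_or_lt_of_le hy with h | h
    · rw [← h, Real.zero_rpow (by linarith : p ≠ 0), mul_zero]
    · rw [← Real.rpow_add_one h.ne' (p-1), sub_add_cancel]
  have h2p : (0:ℝ) ≤ 2 ^ (p - 1) := Real.rpow_nonneg (by norm_num) _
  have hxq : 0 ≤ x ^ (p - 1) := Real.rpow_nonneg hx _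
  have hyq : 0 ≤ y ^ (p - 1) := Real.rpow_nonneg hy _
  have hp0 : 0 < p := by linarith
  nlinarith [mul_le_mul_of_nonneg_right h2 hy, mul_le_mul_of_nonneg_left hyp (by positivity : (0:ℝ) ≤ p * 2 ^ (p-1))]

lemma ros_lyapunov {Ω : Type} [MeasurableSpace Ω] (P : Measure Ω) [IsProbabilityMeasure P]
    {p : ℝ} (hp : 1 ≤ p) {g : Ω → ℝ} (hg0 : ∀ ω, 0 ≤ g ω)
    (hgp : MemLp g (ENNReal.ofReal p) P) :
    ∫ ω, g ω ^ (p - 1) ∂P ≤ (∫ ω, g ω ^ p ∂P) ^ ((p - 1) / p) := by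
  rcases eq_or_lt_of_le hp with h1 | h1
  · rw [← h1]; simp
  · have hpq : (p/(p-1)).HolderConjugate p := (Real.HolderConjugate.conjExponent h1).symm
    have hmem1 : MemLp (fun ω => g ω ^ (p-1)) (ENNReal.ofReal (p/(p-1))) P := by
      have h := hgp.norm_rpow_div (ENNReal.ofReal (p-1))
      rw [ENNReal.toReal_ofReal (by linarith : (0:ℝ) ≤ p - 1),
        show ENNReal.ofReal p / ENNReal.ofReal (p-1) = ENNReal.ofReal (p/(p-1)) from
          (ENNReal.ofReal_div_of_pos (by linarith)).symm] at h
      have heq : (fun x => ‖g x‖ ^ (p-1)) = fun ω => g ω ^ (p-1) := by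
        funext x; rw [Real.norm_of_nonneg (hg0 x)]
      rwa [heq] at h
    have hmem2 : MemLp (fun _ : Ω => (1:ℝ)) (ENNReal.ofReal p) P := memLp_const 1
    have hH := integral_mul_le_Lp_mul_Lq_of_nonneg hpq
      (ae_of_all _ fun ω => Real.rpow_nonneg (hg0 ω) _)
      (ae_of_all _ fun _ : Ω => zero_le_one) hmem1 hmem2
    have e1 : ∀ ω : Ω, (g ω ^ (p-1)) ^ (p/(p-1)) = g ω ^ p := fun ω => by
      rw [← Real.rpow_mul (hg0 ω)]
      congr 1
      field_simp
    calc ∫ ω, g ω ^ (p - 1) ∂P = ∫ ω, g ω ^ (p-1) * (1:ℝ) ∂P := by simp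
      _ ≤ (∫ ω, (g ω ^ (p-1)) ^ (p/(p-1)) ∂P) ^ (1/(p/(p-1)))
            * (∫ (_ : Ω), (1:ℝ) ^ p ∂P) ^ (1/p) := hH
      _ = (∫ ω, g ω ^ p ∂P) ^ ((p-1)/p) := by
          rw [integral_congr_ae (ae_of_all _ e1), one_div_div]
          simp

lemma ros_int_rpow {Ω : Type} [MeasurableSpace Ω] {P : Measure Ω}
    {p : ℝ} (hp : 1 ≤ p) {g : Ω → ℝ} (hg0 : ∀ ω, 0 ≤ g ω)
    (hgp : MemLp g (ENNReal.ofReal p) P) :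
    Integrable (fun ω => g ω ^ p) P := by
  have h := hgp.integrable_norm_rpow (by simp [hp, (by linarith : (0:ℝ) < p)]) ENNReal.ofReal_ne_top
  rw [ENNReal.toReal_ofReal (by linarith : (0:ℝ) ≤ p)] at h
  refine h.congr (ae_of_all _ fun ω => ?_)
  simp only []
  rw [Real.norm_of_nonneg (hg0 ω)]

lemma ros_int {Ω : Type} [MeasurableSpace Ω] {P : Measure Ω} [IsProbabilityMeasure P]
    {p : ℝ} (hp : 1 ≤ p) {g : Ω → ℝ}
    (hgp : MemLp g (ENNReal.ofReal p) P) : Integrable g P :=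
  memLp_one_iff_integrable.mp
    (hgp.mono_exponent (by simpa using ENNReal.one_le_ofReal.mpr hp))

lemma ros_int_sub {Ω : Type} [MeasurableSpace Ω] {P : Measure Ω} [IsProbabilityMeasure P]
    {p : ℝ} (hp : 1 ≤ p) {g : Ω → ℝ} (hg : Measurable g) (hg0 : ∀ ω, 0 ≤ g ω)
    (hgp : MemLp g (ENNReal.ofReal p) P) :
    Integrable (fun ω => g ω ^ (p - 1)) P := by
  have h1 : Integrable (fun ω => 1 + g ω ^ p) P :=
    (integrable_const 1).add (ros_int_rpow hp hg0 hgp)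
  refine h1.mono' ((Real.continuous_rpow_const (by linarith)).measurable.comp hg).aestronglyMeasurable
    (ae_of_all _ fun ω => ?_)
  rw [Real.norm_of_nonneg (Real.rpow_nonneg (hg0 ω) _)]
  rcases le_total (g ω) 1 with h | h
  · have : g ω ^ (p - 1) ≤ 1 := Real.rpow_le_one (hg0 ω) h (by linarith)
    have : (0:ℝ) ≤ g ω ^ p := Real.rpow_nonneg (hg0 ω) p
    linarith [Real.rpow_le_one (hg0 ω) h (by linarith : (0:ℝ) ≤ p - 1)]
  · have h2 : g ω ^ (p - 1) ≤ g ω ^ p :=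
      Real.rpow_le_rpow_of_exponent_le h (by linarith)
    linarith

/-- Rosenthal's inequality for sums of independent nonnegative random variables:
for `1 ≤ p < ∞`, `(E (∑ f_i)^p)^{1/p} ≤ C_p max { (∑ E f_i^p)^{1/p}, ∑ E f_i }`. -/
theorem rosenthal_nonneg (p : ℝ) (hp : 1 ≤ p) :
    ∃ C : ℝ, 0 < C ∧
      ∀ (Ω : Type) [MeasurableSpace Ω] (P : Measure Ω) [IsProbabilityMeasure P]
        (n : ℕ) (f : Fin n → Ω → ℝ),
        (∀ i, Measurable (f i)) →
        iIndepFun f P →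
        (∀ i ω, 0 ≤ f i ω) →
        (∀ i, MemLp (f i) (ENNReal.ofReal p) P) →
        (∫ ω, (∑ i, f i ω) ^ p ∂P) ^ (1/p) ≤
          C * max ((∑ i, ∫ ω, f i ω ^ p ∂P) ^ (1/p)) (∑ i, ∫ ω, f i ω ∂P) := by
  have hp0 : (0:ℝ) < p := by linarith
  set K := p * 2 ^ (p - 1) with hKdef
  have hK1 : 1 ≤ K := by
    have h2 : (1:ℝ) ≤ 2 ^ (p - 1) := Real.one_le_rpow (by norm_num) (by linarith)
    nlinarith
  have hK0 : 0 < K := by linarith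
  refine ⟨2 * K + 1, by linarith, ?_⟩
  intro Ω _ P _ n f hmeas hindep hpos hmem
  have hSmem : ∀ s : Finset (Fin n), MemLp (fun ω => ∑ i ∈ s, f i ω) (ENNReal.ofReal p) P :=
    fun s => memLp_finsetSum s (fun i _ => hmem i)
  have hSpos : ∀ (s : Finset (Fin n)) ω, 0 ≤ ∑ i ∈ s, f i ω :=
    fun s ω => Finset.sum_nonneg fun i _ => hpos i ω
  have hSmeas : ∀ s : Finset (Fin n), Measurable (fun ω => ∑ i ∈ s, f i ω) :=
    fun s => Finset.measurable_sum s (fun i _ => hmeas i)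
  have hSint : ∀ s : Finset (Fin n), Integrable (fun ω => (∑ i ∈ s, f i ω) ^ p) P :=
    fun s => ros_int_rpow hp (hSpos s) (hSmem s)
  set M := (∫ ω, (∑ i, f i ω) ^ p ∂P) ^ (1/p) with hMdef
  have hIntSp_nonneg : ∀ s : Finset (Fin n), 0 ≤ ∫ ω, (∑ i ∈ s, f i ω) ^ p ∂P :=
    fun s => integral_nonneg (fun ω => Real.rpow_nonneg (hSpos s ω) p)
  have hM0 : 0 ≤ M := Real.rpow_nonneg (hIntSp_nonneg _) _
  have hMp : M ^ p = ∫ ω, (∑ i, f i ω) ^ p ∂P := by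
    rw [hMdef, ← Real.rpow_mul (hIntSp_nonneg Finset.univ), one_div,
      inv_mul_cancel₀ hp0.ne', Real.rpow_one]
  have hMp1_0 : 0 ≤ M ^ (p - 1) := Real.rpow_nonneg hM0 _
  have hmono : ∀ s : Finset (Fin n),
      ∫ ω, (∑ i ∈ s, f i ω) ^ p ∂P ≤ ∫ ω, (∑ i, f i ω) ^ p ∂P := fun s =>
    integral_mono (hSint s) (hSint Finset.univ) (fun ω => Real.rpow_le_rpow (hSpos s ω)
      (Finset.sum_le_sum_of_subset_of_nonneg (Finset.subset_univ s) (fun i _ _ => hpos i ω))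
      hp0.le)
  have hstep4 : ∀ s : Finset (Fin n), ∫ ω, (∑ i ∈ s, f i ω) ^ (p-1) ∂P ≤ M ^ (p - 1) := by
    intro s
    have h1 := ros_lyapunov P hp (hSpos s) (hSmem s)
    have h2 : (∫ ω, (∑ i ∈ s, f i ω) ^ p ∂P) ^ ((p-1)/p)
        ≤ (∫ ω, (∑ i, f i ω) ^ p ∂P) ^ ((p-1)/p) :=
      Real.rpow_le_rpow (hIntSp_nonneg s) (hmono s) (by apply div_nonneg <;> linarith)
    have h3 : M ^ (p - 1) = (∫ ω, (∑ i, f i ω) ^ p ∂P) ^ ((p-1)/p) := by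
      rw [hMdef, ← Real.rpow_mul (hIntSp_nonneg Finset.univ)]
      congr 1
      ring
    rw [h3]
    exact h1.trans h2
  have hfj_nonneg : ∀ j, 0 ≤ ∫ ω, f j ω ∂P :=
    fun j => integral_nonneg (fun ω => hpos j ω)
  have hfjp_nonneg : ∀ j, 0 ≤ ∫ ω, f j ω ^ p ∂P :=
    fun j => integral_nonneg (fun ω => Real.rpow_nonneg (hpos j ω) p)
  have claim : ∀ s : Finset (Fin n), ∫ ω, (∑ i ∈ s, f i ω) ^ p ∂P ≤
      K * (∑ i ∈ s, ∫ ω, f i ω ^ p ∂P) + K * M ^ (p-1) * ∑ i ∈ s, ∫ ω, f i ω ∂P := by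
    intro s
    induction s using Finset.induction_on with
    | empty => simp [Real.zero_rpow hp0.ne']
    | @insert j s hj ih =>
      have hSsubmeas : Measurable (fun ω => (∑ i ∈ s, f i ω) ^ (p-1)) :=
        (Real.continuous_rpow_const (by linarith)).measurable.comp (hSmeas s)
      have hInd : IndepFun (fun ω => (∑ i ∈ s, f i ω) ^ (p-1)) (f j) P := by
        have h := hindep.indepFun_finsetSum_of_notMem hmeas hj
        have h2 := h.comp (Real.continuous_rpow_const
          (by linarith : (0:ℝ) ≤ p - 1)).measurable measurable_id
        have heq : ((fun x : ℝ => x ^ (p-1)) ∘ (∑ i ∈ s, f i)) =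
            fun ω => (∑ i ∈ s, f i ω) ^ (p-1) := by
          funext ω; simp [Finset.sum_apply]
        rwa [heq] at h2
      have hfjint : Integrable (f j) P := ros_int hp (hmem j)
      have hSsub : Integrable (fun ω => (∑ i ∈ s, f i ω) ^ (p-1)) P :=
        ros_int_sub hp (hSmeas s) (hSpos s) (hSmem s)
      have hprodint : Integrable (fun ω => (∑ i ∈ s, f i ω) ^ (p-1) * f j ω) P :=
        hInd.integrable_mul hSsub hfjint
      have hprod : ∫ ω, (∑ i ∈ s, f i ω) ^ (p-1) * f j ω ∂P
          = (∫ ω, (∑ i ∈ s, f i ω) ^ (p-1) ∂P) * ∫ ω, f j ω ∂P := by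
        have h := hInd.integral_fun_mul_eq_mul_integral
          hSsubmeas.aestronglyMeasurable (hmeas j).aestronglyMeasurable
        simpa using h
      have hSsub_nonneg : 0 ≤ ∫ ω, (∑ i ∈ s, f i ω) ^ (p-1) ∂P :=
        integral_nonneg (fun ω => Real.rpow_nonneg (hSpos s ω) _)
      have hfjpint : Integrable (fun ω => f j ω ^ p) P := ros_int_rpow hp (hpos j) (hmem j)
      have hI1 : Integrable (fun ω => (∑ i ∈ s, f i ω) ^ (p-1) * f j ω + f j ω ^ p) P :=
        hprodint.add hfjpint
      have hI2 : Integrable (fun ω => K * ((∑ i ∈ s, f i ω) ^ (p-1) * f j ω + f j ω ^ p)) P :=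
        hI1.const_mul K
      calc ∫ ω, (∑ i ∈ insert j s, f i ω) ^ p ∂P
          ≤ ∫ ω, ((∑ i ∈ s, f i ω) ^ p
              + K * ((∑ i ∈ s, f i ω) ^ (p-1) * f j ω + f j ω ^ p)) ∂P := by
            refine integral_mono (hSint _) ((hSint s).add hI2) ?_
            intro ω
            dsimp only
            rw [Finset.sum_insert hj, add_comm (f j ω)]
            exact ros_aux3 hp (hSpos s ω) (hpos j ω)
        _ = ∫ ω, (∑ i ∈ s, f i ω) ^ p ∂P
              + K * ((∫ ω, (∑ i ∈ s, f i ω) ^ (p-1) ∂P) * (∫ ω, f j ω ∂P)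
                + ∫ ω, f j ω ^ p ∂P) := by
            rw [integral_add (hSint s) hI2, integral_const_mul,
              integral_add hprodint hfjpint, hprod]
        _ ≤ K * (∑ i ∈ insert j s, ∫ ω, f i ω ^ p ∂P)
              + K * M ^ (p-1) * ∑ i ∈ insert j s, ∫ ω, f i ω ∂P := by
            rw [Finset.sum_insert hj, Finset.sum_insert hj]
            have h4 := hstep4 s
            have h5 := hfj_nonneg j
            nlinarith [ih, hfjp_nonneg j, mul_le_mul_of_nonneg_right h4 h5]
  set A := ∑ i, ∫ ω, f i ω ∂P with hAdef
  set B := ∑ i, ∫ ω, f i ω ^ p ∂P with hBdef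
  have hMA : M ^ p ≤ K * B + K * M ^ (p-1) * A := by
    rw [hMp]; exact claim Finset.univ
  set R := max (B ^ (1/p)) A with hRdef
  have hA0 : 0 ≤ A := Finset.sum_nonneg fun i _ => hfj_nonneg i
  have hB0 : 0 ≤ B := Finset.sum_nonneg fun i _ => hfjp_nonneg i
  have hR0 : 0 ≤ R := le_trans hA0 (le_max_right _ _)
  have hBR : B ≤ R ^ p := by
    have hBB : B = (B ^ (1/p)) ^ p := by
      rw [← Real.rpow_mul hB0, one_div, inv_mul_cancel₀ hp0.ne', Real.rpow_one]
    rw [hBB]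
    exact Real.rpow_le_rpow (Real.rpow_nonneg hB0 _) (le_max_left _ _) hp0.le
  have hAR : A ≤ R := le_max_right _ _
  rcases le_or_gt M R with h | h
  · nlinarith
  · have hMpos : 0 < M := lt_of_le_of_lt hR0 h
    have hRp : R ^ p ≤ M ^ (p-1) * R := by
      rcases eq_or_lt_of_le hR0 with h0 | h0
      · rw [← h0, Real.zero_rpow hp0.ne', mul_zero]
      · have : R ^ p = R ^ (p-1) * R := by
          rw [← Real.rpow_add_one h0.ne' (p-1), sub_add_cancel]
        rw [this]
        exact mul_le_mul_of_nonneg_right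
          (Real.rpow_le_rpow hR0 h.le (by linarith)) hR0
    have hMM : M ^ p = M ^ (p-1) * M := by
      rw [← Real.rpow_add_one hMpos.ne' (p-1), sub_add_cancel]
    have hMp1 : 0 < M ^ (p-1) := Real.rpow_pos_of_pos hMpos _
    have hstep : M ^ (p-1) * M ≤ M ^ (p-1) * (2 * K * R) := by
      have h1 : K * B ≤ K * (M ^ (p-1) * R) := by nlinarith
      have h2 : K * M ^ (p-1) * A ≤ K * M ^ (p-1) * R :=
        mul_le_mul_of_nonneg_left hAR (mul_nonneg hK0.le hMp1.le)
      nlinarith [hMA, hMM]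
    have hfin : M ≤ 2 * K * R := le_of_mul_le_mul_left hstep hMp1
    nlinarith
end
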